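/- arXiv:1401.0279 — 13 statements merged into one kernel-verified Lean document; each statement's English description precedes it below -/
import Mathlib

section
/- For real numbers x ≥ 2 and y ≥ 2, the inequality sqrt((x+y-1)/((x+1)y)) ≤ sqrt((x+y-2)/(xy)) holds, with equality if and only if y = 2. -/
open Real

theorem stmt0 (x y : ℝ) (hx : 2 ≤ x) (hy : 2 ≤ y) :
    Real.sqrt ((x + y - 1) / ((x + 1) * y)) ≤ Real.sqrt ((x + y - 2) / (x * y)) ∧
    (Real.sqrt ((x + y - 1) / ((x + 1) * y)) = Real.sqrt ((x + y - 2) / (x * y)) ↔ y = 2) := by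
  have hx0 : 0 < x := by linarith
  have hy0 : 0 < y := by linarith
  have hd1 : 0 < (x + 1) * y := by positivity
  have hd2 : 0 < x * y := by positivity
  have ha : 0 ≤ (x + y - 1) / ((x + 1) * y) := by
    apply div_nonneg <;> nlinarith
  have hb : 0 ≤ (x + y - 2) / (x * y) := by
    apply div_nonneg <;> nlinarith
  have hle : (x + y - 1) / ((x + 1) * y) ≤ (x + y - 2) / (x * y) := by
    rw [div_le_div_iff₀ hd1 hd2]
    nlinarith
  constructor
  · exact Real.sqrt_le_sqrt hle
  · constructor
    · intro h
      have := (Real.sqrt_inj ha hb).mp h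
      rw [div_eq_div_iff hd1.ne' hd2.ne'] at this
      nlinarith
    · intro h
      subst h
      congr 1
      rw [div_eq_div_iff hd1.ne' hd2.ne']
      ring
end

section
/- Let g(x,y) = -f(x,y) + f(x+1,y) where f(x,y) = sqrt((x+y-2)/(xy)). For real numbers x, y ≥ 2, the function g is monotonically increasing in x; that is, if 2 ≤ x1 ≤ x2 and y ≥ 2, then g(x1,y) ≤ g(x2,y). -/
open Real

theorem stmt1 (f : ℝ → ℝ → ℝ) (hf : ∀ x y, f x y = Real.sqrt ((x + y - 2) / (x * y)))
    (g : ℝ → ℝ → ℝ) (hg : ∀ x y, g x y = -f x y + f (x + 1) y)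
    (x1 x2 y : ℝ) (hx1 : 2 ≤ x1) (hx12 : x1 ≤ x2) (hy : 2 ≤ y) :
    g x1 y ≤ g x2 y := by
  have hy0 : (0:ℝ) < y := by linarith
  -- positivity of f
  have hfpos : ∀ x : ℝ, 2 ≤ x → 0 < f x y := by
    intro x hx
    rw [hf]
    apply Real.sqrt_pos.mpr
    apply div_pos (by linarith)
    positivity
  have hfsq : ∀ x : ℝ, 2 ≤ x → (f x y)^2 = (x + y - 2)/(x*y) := by
    intro x hx
    rw [hf]
    apply Real.sq_sqrt
    apply div_nonneg (by linarith)
    positivity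
  -- monotonicity of x * f x y
  have mono : ∀ a b : ℝ, 2 ≤ a → a ≤ b → a * f a y ≤ b * f b y := by
    intro a b ha hab
    have hb : (2:ℝ) ≤ b := le_trans ha hab
    have hfa := hfpos a ha
    have hfb := hfpos b hb
    have h1 : 0 ≤ a * f a y := by positivity
    have h2 : 0 ≤ b * f b y := by positivity
    have hsq : (a * f a y)^2 ≤ (b * f b y)^2 := by
      have ea : (a * f a y)^2 = a * (a + y - 2) / y := by
        rw [mul_pow, hfsq a ha]
        field_simp
      have eb : (b * f b y)^2 = b * (b + y - 2) / y := by
        rw [mul_pow, hfsq b hb]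
        field_simp
      rw [ea, eb, div_le_div_iff₀ hy0 hy0]
      nlinarith [mul_nonneg (mul_nonneg (sub_nonneg.mpr hab)
        (show (0:ℝ) ≤ a + b + y - 2 by linarith)) hy0.le]
    calc a * f a y = Real.sqrt ((a * f a y)^2) := (Real.sqrt_sq h1).symm
      _ ≤ Real.sqrt ((b * f b y)^2) := Real.sqrt_le_sqrt hsq
      _ = b * f b y := Real.sqrt_sq h2
  -- the key identity
  have gval : ∀ x : ℝ, 2 ≤ x →
      g x y = -(y-2) / (x*(x+1)*y*(f x y + f (x+1) y)) := by
    intro x hx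
    have hx1' : (2:ℝ) ≤ x + 1 := by linarith
    have hP := hfpos x hx
    have hQ := hfpos (x+1) hx1'
    have hx0 : x ≠ 0 := by linarith
    have hx10 : x + 1 ≠ 0 := by linarith
    have hy0' : y ≠ 0 := ne_of_gt hy0
    have hD : 0 < x*(x+1)*y*(f x y + f (x+1) y) := by positivity
    rw [hg, eq_div_iff (ne_of_gt hD)]
    have h1 := hfsq x hx
    have h2 := hfsq (x+1) hx1'
    have key : x*(x+1)*y*((f (x+1) y)^2 - (f x y)^2) = -(y-2) := by
      rw [h1, h2]
      field_simp
      ring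
    nlinarith [key]
  rw [gval x1 hx1, gval x2 (by linarith)]
  have hx2 : (2:ℝ) ≤ x2 := by linarith
  set P1 := f x1 y with hP1
  set Q1 := f (x1+1) y with hQ1
  set P2 := f x2 y with hP2
  set Q2 := f (x2+1) y with hQ2
  have hP1p := hfpos x1 hx1
  have hQ1p := hfpos (x1+1) (by linarith)
  have hP2p := hfpos x2 hx2
  have hQ2p := hfpos (x2+1) (by linarith)
  have hD1 : 0 < x1*(x1+1)*y*(P1 + Q1) := by positivity
  have hD2 : 0 < x2*(x2+1)*y*(P2 + Q2) := by positivity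
  have e1 : (x1+1)*(x1*P1) ≤ (x2+1)*(x2*P2) :=
    mul_le_mul (by linarith) (mono x1 x2 hx1 hx12) (by positivity) (by linarith)
  have e2 : x1*((x1+1)*Q1) ≤ x2*((x2+1)*Q2) :=
    mul_le_mul (by linarith) (mono (x1+1) (x2+1) (by linarith) (by linarith))
      (by positivity) (by linarith)
  have hD12 : x1*(x1+1)*y*(P1 + Q1) ≤ x2*(x2+1)*y*(P2 + Q2) := by
    nlinarith [mul_le_mul_of_nonneg_left e1 (le_of_lt hy0),
      mul_le_mul_of_nonneg_left e2 (le_of_lt hy0)]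
  rw [div_le_div_iff₀ hD1 hD2]
  nlinarith [mul_le_mul_of_nonneg_left hD12 (by linarith : (0:ℝ) ≤ y - 2)]
end

section
/- Let g(x,y) = -f(x,y) + f(x+1,y) where f(x,y) = sqrt((x+y-2)/(xy)). For real numbers x, y ≥ 2, the function g is monotonically decreasing in y; that is, if x ≥ 2 and 2 ≤ y1 ≤ y2, then g(x,y2) ≤ g(x,y1). -/
open Real

lemma keylem (x y : ℝ) (hx : 2 ≤ x) (hy : 2 ≤ y) :
    (x-2)*(x+1) * Real.sqrt ((x+1+y-2)/((x+1)*y)) ≤ x*(x-1) * Real.sqrt ((x+y-2)/(x*y)) := by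
  have hx0 : (0:ℝ) < x := by linarith
  have hx1 : (0:ℝ) < x + 1 := by linarith
  have hy0 : (0:ℝ) < y := by linarith
  have hB : (0:ℝ) < (x+1)*y := by positivity
  have hD : (0:ℝ) < x*y := by positivity
  rw [show (x-2)*(x+1) * Real.sqrt ((x+1+y-2)/((x+1)*y))
        = Real.sqrt (((x-2)*(x+1))^2 * ((x+1+y-2)/((x+1)*y))) from by
      rw [Real.sqrt_mul (sq_nonneg _), Real.sqrt_sq (by nlinarith)],
    show x*(x-1) * Real.sqrt ((x+y-2)/(x*y))
        = Real.sqrt ((x*(x-1))^2 * ((x+y-2)/(x*y))) from by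
      rw [Real.sqrt_mul (sq_nonneg _), Real.sqrt_sq (by nlinarith)]]
  apply Real.sqrt_le_sqrt
  rw [mul_div_assoc', mul_div_assoc', div_le_div_iff₀ hB hD]
  nlinarith [mul_nonneg (mul_nonneg (mul_nonneg hy0.le hx0.le) hx1.le)
    (show (0:ℝ) ≤ (x-2)^2*(y-2) + 4*(x-2)^2 + 5*(x-2)*(y-2) + 12*(x-2) + 2*(y-2) + 4 by
      nlinarith [mul_nonneg (sq_nonneg (x-2)) (by linarith : (0:ℝ) ≤ y-2),
        mul_nonneg (by linarith : (0:ℝ) ≤ x-2) (by linarith : (0:ℝ) ≤ y-2)])]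

theorem stmt2 (f : ℝ → ℝ → ℝ) (hf : ∀ x y, f x y = Real.sqrt ((x + y - 2) / (x * y)))
    (g : ℝ → ℝ → ℝ) (hg : ∀ x y, g x y = -f x y + f (x + 1) y)
    (x y1 y2 : ℝ) (hx : 2 ≤ x) (hy1 : 2 ≤ y1) (hy12 : y1 ≤ y2) :
    g x y2 ≤ g x y1 := by
  have hy2 : 2 ≤ y2 := le_trans hy1 hy12
  have hx0 : (0:ℝ) < x := by linarith
  have hx1 : (0:ℝ) < x + 1 := by linarith
  have hy10 : (0:ℝ) < y1 := by linarith
  have hy20 : (0:ℝ) < y2 := by linarith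
  rw [hg, hg, hf, hf, hf, hf]
  set a := Real.sqrt ((x + 1 + y1 - 2) / ((x+1) * y1)) with hadef
  set b := Real.sqrt ((x + 1 + y2 - 2) / ((x+1) * y2)) with hbdef
  set c := Real.sqrt ((x + y1 - 2) / (x * y1)) with hcdef
  set d := Real.sqrt ((x + y2 - 2) / (x * y2)) with hddef
  have ha0 : 0 < a := Real.sqrt_pos.2 (div_pos (by linarith) (by positivity))
  have hb0 : 0 < b := Real.sqrt_pos.2 (div_pos (by linarith) (by positivity))
  have hc0 : 0 < c := Real.sqrt_pos.2 (div_pos (by linarith) (by positivity))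
  have hd0 : 0 < d := Real.sqrt_pos.2 (div_pos (by linarith) (by positivity))
  have ha2 : a^2 = (x + 1 + y1 - 2) / ((x+1) * y1) :=
    Real.sq_sqrt (div_nonneg (by linarith) (by positivity))
  have hb2 : b^2 = (x + 1 + y2 - 2) / ((x+1) * y2) :=
    Real.sq_sqrt (div_nonneg (by linarith) (by positivity))
  have hc2 : c^2 = (x + y1 - 2) / (x * y1) :=
    Real.sq_sqrt (div_nonneg (by linarith) (by positivity))
  have hd2 : d^2 = (x + y2 - 2) / (x * y2) :=
    Real.sq_sqrt (div_nonneg (by linarith) (by positivity))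
  have k1 : (x-2)*(x+1) * a ≤ x*(x-1) * c := keylem x y1 hx hy1
  have k2 : (x-2)*(x+1) * b ≤ x*(x-1) * d := keylem x y2 hx hy2
  have hab : a^2 - b^2 = (x-1)*(y2-y1)/(((x+1)*y1)*y2) := by
    rw [ha2, hb2]; field_simp; ring
  have hcd : c^2 - d^2 = (x-2)*(y2-y1)/((x*y1)*y2) := by
    rw [hc2, hd2]; field_simp; ring
  have h3 : (c^2 - d^2)*(a+b) ≤ (a^2 - b^2)*(c+d) := by
    rw [hab, hcd, div_mul_eq_mul_div, div_mul_eq_mul_div,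
      div_le_div_iff₀ (by positivity) (by positivity)]
    have hint := mul_le_mul_of_nonneg_left (add_le_add k1 k2)
      (show (0:ℝ) ≤ (y2-y1)*(y1*y2) from
        mul_nonneg (by linarith) (by positivity))
    nlinarith [hint]
  have h4 : (c - d)*((a+b)*(c+d)) ≤ (a - b)*((a+b)*(c+d)) := by
    linear_combination h3
  have h5 : c - d ≤ a - b :=
    le_of_mul_le_mul_right h4 (by positivity)
  linarith
end

section
/- Let f(x,y) = sqrt((x+y-2)/(xy)). For real numbers x, y ≥ 2 (with y ≥ 3 so that y-1 ≥ 2), the quantity -f(x,y) + f(x,y-1) is non-negative, increases in x, and decreases in y. -/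
open Real

lemma sqrt_key (A1 A2 B1 B2 : ℝ) (hA1 : 0 ≤ A1) (hA2 : 0 ≤ A2) (hB1 : 0 ≤ B1) (hB2 : 0 ≤ B2)
    (hsum : A1 + B2 ≤ A2 + B1) (hprod : A1 * B2 ≤ A2 * B1) :
    Real.sqrt A1 - Real.sqrt A2 ≤ Real.sqrt B1 - Real.sqrt B2 := by
  have h1 : Real.sqrt A1 * Real.sqrt B2 ≤ Real.sqrt A2 * Real.sqrt B1 := by
    rw [← Real.sqrt_mul hA1, ← Real.sqrt_mul hA2]
    exact Real.sqrt_le_sqrt hprod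
  nlinarith [Real.sq_sqrt hA1, Real.sq_sqrt hA2, Real.sq_sqrt hB1, Real.sq_sqrt hB2,
    Real.sqrt_nonneg A1, Real.sqrt_nonneg A2, Real.sqrt_nonneg B1, Real.sqrt_nonneg B2]

theorem stmt3 (f : ℝ → ℝ → ℝ) (hf : ∀ x y, f x y = Real.sqrt ((x + y - 2) / (x * y))) :
    (∀ x y : ℝ, 2 ≤ x → 3 ≤ y → 0 ≤ -f x y + f x (y - 1)) ∧
    (∀ x1 x2 y : ℝ, 2 ≤ x1 → x1 ≤ x2 → 3 ≤ y →
      -f x1 y + f x1 (y - 1) ≤ -f x2 y + f x2 (y - 1)) ∧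
    (∀ x y1 y2 : ℝ, 2 ≤ x → 3 ≤ y1 → y1 ≤ y2 →
      -f x y2 + f x (y2 - 1) ≤ -f x y1 + f x (y1 - 1)) := by
  refine ⟨?_, ?_, ?_⟩
  · intro x y hx hy
    rw [hf, hf]
    have hx0 : (0:ℝ) < x := by linarith
    have hy1 : (0:ℝ) < y - 1 := by linarith
    have hy0 : (0:ℝ) < y := by linarith
    have h : (x + y - 2) / (x * y) ≤ (x + (y - 1) - 2) / (x * (y - 1)) := by
      rw [div_le_div_iff₀ (by positivity) (by positivity)]
      nlinarith
    linarith [Real.sqrt_le_sqrt h]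
  · intro x1 x2 y h1 h12 hy
    rw [hf, hf, hf, hf]
    have hx1 : (0:ℝ) < x1 := by linarith
    have hx2 : (0:ℝ) < x2 := by linarith
    have hy1 : (0:ℝ) < y - 1 := by linarith
    have hy0 : (0:ℝ) < y := by linarith
    have hsum : (x1 + (y - 1) - 2) / (x1 * (y - 1)) + (x2 + y - 2) / (x2 * y) ≤
        (x2 + (y - 1) - 2) / (x2 * (y - 1)) + (x1 + y - 2) / (x1 * y) := by
      rw [div_add_div _ _ (by positivity) (by positivity),
        div_add_div _ _ (by positivity) (by positivity),
        div_le_div_iff₀ (by positivity) (by positivity)]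
      nlinarith [mul_nonneg (mul_nonneg (mul_nonneg (sub_nonneg.2 h12) hx1.le) hx2.le)
        (mul_nonneg hy0.le hy1.le)]
    have hprod : (x1 + (y - 1) - 2) / (x1 * (y - 1)) * ((x2 + y - 2) / (x2 * y)) ≤
        (x2 + (y - 1) - 2) / (x2 * (y - 1)) * ((x1 + y - 2) / (x1 * y)) := by
      rw [div_mul_div_comm, div_mul_div_comm, div_le_div_iff₀ (by positivity) (by positivity)]
      nlinarith [mul_nonneg (mul_nonneg (mul_nonneg (sub_nonneg.2 h12) hx1.le) hx2.le)
        (mul_nonneg hy0.le hy1.le), sq_nonneg (x2 - x1), mul_pos hx1 hx2, mul_pos hy0 hy1]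
    have := sqrt_key ((x1 + (y - 1) - 2) / (x1 * (y - 1))) ((x2 + (y - 1) - 2) / (x2 * (y - 1)))
      ((x1 + y - 2) / (x1 * y)) ((x2 + y - 2) / (x2 * y))
      (div_nonneg (by linarith) (by positivity)) (div_nonneg (by linarith) (by positivity))
      (div_nonneg (by linarith) (by positivity)) (div_nonneg (by linarith) (by positivity))
      hsum hprod
    linarith
  · intro x y1 y2 hx hy1 hy12
    rw [hf, hf, hf, hf]
    have hx0 : (0:ℝ) < x := by linarith
    have hy10 : (0:ℝ) < y1 := by linarith
    have hy20 : (0:ℝ) < y2 := by linarith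
    have hy11 : (0:ℝ) < y1 - 1 := by linarith
    have hy21 : (0:ℝ) < y2 - 1 := by linarith
    have e1 : (x + (y1 - 1) - 2) / (x * (y1 - 1)) - (x + y1 - 2) / (x * y1)
        = (x - 2) / (x * y1 * (y1 - 1)) := by
      field_simp
      ring
    have e2 : (x + (y2 - 1) - 2) / (x * (y2 - 1)) - (x + y2 - 2) / (x * y2)
        = (x - 2) / (x * y2 * (y2 - 1)) := by
      field_simp
      ring
    have hd : (x - 2) / (x * y2 * (y2 - 1)) ≤ (x - 2) / (x * y1 * (y1 - 1)) := by
      apply div_le_div_of_nonneg_left (by linarith) (by positivity)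
      nlinarith [mul_nonneg (mul_nonneg hx0.le (sub_nonneg.2 hy12))
        (by linarith : (0:ℝ) ≤ y1 + y2 - 1)]
    have hsum : (x + (y2 - 1) - 2) / (x * (y2 - 1)) + (x + y1 - 2) / (x * y1) ≤
        (x + (y1 - 1) - 2) / (x * (y1 - 1)) + (x + y2 - 2) / (x * y2) := by linarith
    have hprod : (x + (y2 - 1) - 2) / (x * (y2 - 1)) * ((x + y1 - 2) / (x * y1)) ≤
        (x + (y1 - 1) - 2) / (x * (y1 - 1)) * ((x + y2 - 2) / (x * y2)) := by
      rw [div_mul_div_comm, div_mul_div_comm, div_le_div_iff₀ (by positivity) (by positivity)]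
      nlinarith [mul_nonneg (mul_nonneg (mul_nonneg (mul_pos hx0 hx0).le
        (by linarith : (0:ℝ) ≤ x - 2)) (sub_nonneg.2 hy12))
        (by linarith : (0:ℝ) ≤ y1 + y2 + x - 3)]
    have := sqrt_key ((x + (y2 - 1) - 2) / (x * (y2 - 1))) ((x + (y1 - 1) - 2) / (x * (y1 - 1)))
      ((x + y2 - 2) / (x * y2)) ((x + y1 - 2) / (x * y1))
      (div_nonneg (by linarith) (by positivity)) (div_nonneg (by linarith) (by positivity))
      (div_nonneg (by linarith) (by positivity)) (div_nonneg (by linarith) (by positivity))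
      hsum hprod
    linarith
end

section
/- Let f(x,y) = sqrt((x+y-2)/(xy)). For real numbers x ≥ 2, y ≥ 2, Δx ≥ 0 and 0 ≤ Δy < y with y - Δy ≥ 2, the function g(x,y) = -f(x,y) + f(x+Δx, y-Δy) is increasing in x and decreasing in y. -/
open Real

private lemma sqrt_div_le (a b c d : ℝ) (ha : 0 ≤ a) (hc : 0 ≤ c) (hb : 0 < b) (hd : 0 < d)
    (h : a^2 * d ≤ c^2 * b) : a / Real.sqrt b ≤ c / Real.sqrt d := by
  rw [div_le_div_iff₀ (Real.sqrt_pos.mpr hb) (Real.sqrt_pos.mpr hd)]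
  have h1 : (a * Real.sqrt d)^2 ≤ (c * Real.sqrt b)^2 := by
    rw [mul_pow, mul_pow, Real.sq_sqrt hd.le, Real.sq_sqrt hb.le]; exact h
  calc a * Real.sqrt d = Real.sqrt ((a * Real.sqrt d)^2) := (Real.sqrt_sq (by positivity)).symm
    _ ≤ Real.sqrt ((c * Real.sqrt b)^2) := Real.sqrt_le_sqrt h1
    _ = c * Real.sqrt b := Real.sqrt_sq (by positivity)

private lemma deriv_aux (c : ℝ) (hc : 0 < c) {x : ℝ} (hx : 0 < x) (hpos : 0 < x + c - 2) :
    HasDerivAt (fun t => Real.sqrt ((t + c - 2) / (t * c)))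
      ((2 - c) / (x^2 * c) / (2 * Real.sqrt ((x + c - 2) / (x * c)))) x := by
  have hnum : HasDerivAt (fun t : ℝ => t + c - 2) 1 x := ((hasDerivAt_id x).add_const c).sub_const 2
  have hden : HasDerivAt (fun t : ℝ => t * c) c x := by simpa using (hasDerivAt_id x).mul_const c
  have hne : x * c ≠ 0 := by positivity
  have h1 := hnum.div hden hne
  have h1' : HasDerivAt (fun t => (t + c - 2) / (t * c)) ((2 - c) / (x^2 * c)) x := by
    convert h1 using 1
    · rfl
    · rfl
    · rfl
    rw [div_eq_div_iff (by positivity) (by positivity)]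
    ring
  have hne2 : (x + c - 2) / (x * c) ≠ 0 := ne_of_gt (by positivity)
  exact h1'.sqrt hne2

private lemma stepA (c a b : ℝ) (hc : 0 ≤ c) (ha : 0 ≤ a) (hab : a ≤ b) :
    a^2 * ((b + 2) * (c + b)) ≤ b^2 * ((a + 2) * (c + a)) := by
  nlinarith [mul_nonneg (mul_nonneg (sub_nonneg.2 hab) hc) (mul_nonneg ha (ha.trans hab)),
    mul_nonneg (mul_nonneg (sub_nonneg.2 hab) hc) ha,
    mul_nonneg (mul_nonneg (sub_nonneg.2 hab) hc) (ha.trans hab),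
    mul_nonneg (sub_nonneg.2 hab) (mul_nonneg ha (ha.trans hab))]

private lemma stepB (k m n : ℝ) (hk : 0 ≤ k) (hm : 0 ≤ m) (hmn : m ≤ n) :
    m^3 * (m + k) ≤ n^3 * (n + k) := by nlinarith [pow_le_pow_left₀ hm hmn 3, pow_le_pow_left₀ hm hmn 4, pow_nonneg hm 3, pow_nonneg (hm.trans hmn) 3]


private lemma deriv_aux2 (c : ℝ) (hc : 0 < c) {t : ℝ} (ht : 0 < t) (hpos : 0 < t + c - 2) :
    HasDerivAt (fun u => Real.sqrt ((c + u - 2) / (c * u)))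
      ((2 - c) / (t^2 * c) / (2 * Real.sqrt ((c + t - 2) / (c * t)))) t := by
  have h := deriv_aux c hc ht hpos
  have e : (fun u => Real.sqrt ((u + c - 2) / (u * c))) =
      (fun u => Real.sqrt ((c + u - 2) / (c * u))) := by
    funext u; congr 1; ring
  rw [e] at h
  have e2 : (c + t - 2) / (c * t) = (t + c - 2) / (t * c) := by ring
  rw [e2]
  exact h

set_option maxHeartbeats 1000000 in
theorem stmt4 (f : ℝ → ℝ → ℝ) (hf : ∀ x y, f x y = Real.sqrt ((x + y - 2) / (x * y)))
    (Δx Δy : ℝ) (hΔx : 0 ≤ Δx) (hΔy : 0 ≤ Δy)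
    (g : ℝ → ℝ → ℝ) (hg : ∀ x y, g x y = -f x y + f (x + Δx) (y - Δy)) :
    (∀ x1 x2 y : ℝ, 2 ≤ x1 → x1 ≤ x2 → 2 ≤ y → Δy < y → 2 ≤ y - Δy →
      g x1 y ≤ g x2 y) ∧
    (∀ x y1 y2 : ℝ, 2 ≤ x → 2 ≤ y1 → y1 ≤ y2 → Δy < y1 → 2 ≤ y1 - Δy →
      g x y2 ≤ g x y1) := by
  constructor
  · intro x1 x2 y hx1 hx12 hy hΔyy hy2'
    set y' := y - Δy with hy'def
    have hy'2 : 2 ≤ y' := hy2'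
    set G : ℝ → ℝ := fun x => -Real.sqrt ((x + y - 2) / (x * y)) +
      Real.sqrt ((x + Δx + y' - 2) / ((x + Δx) * y')) with hGdef
    have hGg : ∀ x, g x y = G x := by
      intro x; rw [hg, hf, hf]
    set D : ℝ → ℝ := fun x =>
      -((2 - y) / (x^2 * y) / (2 * Real.sqrt ((x + y - 2) / (x * y)))) +
      ((2 - y') / ((x + Δx)^2 * y') / (2 * Real.sqrt ((x + Δx + y' - 2) / ((x + Δx) * y')))) with hDdef
    have hD : ∀ x ∈ Set.Ici (2:ℝ), HasDerivAt G (D x) x := by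
      intro x hx
      have hx2 : (2:ℝ) ≤ x := hx
      have h1 := deriv_aux y (by linarith) (show (0:ℝ) < x by linarith)
        (show (0:ℝ) < x + y - 2 by linarith)
      have h2 := deriv_aux y' (by linarith) (show (0:ℝ) < x + Δx by linarith)
        (show (0:ℝ) < (x + Δx) + y' - 2 by linarith)
      have hinner : HasDerivAt (fun x : ℝ => x + Δx) 1 x := (hasDerivAt_id x).add_const Δx
      have h2' := h2.comp x hinner
      simp only [Function.comp, mul_one] at h2'
      exact h1.neg.add h2'
    have hDnn : ∀ x ∈ Set.Ici (2:ℝ), 0 ≤ D x := by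
      intro x hx
      have hx2 : (2:ℝ) ≤ x := hx
      have hp : (0:ℝ) < (x + y - 2) / (x * y) := by
        apply div_pos <;> nlinarith
      have hq : (0:ℝ) < (x + Δx + y' - 2) / ((x + Δx) * y') := by
        apply div_pos <;> nlinarith
      have hcond : ((y' - 2) / ((x + Δx)^2 * y'))^2 * ((x + y - 2) / (x * y)) ≤
          ((y - 2) / (x^2 * y))^2 * ((x + Δx + y' - 2) / ((x + Δx) * y')) := by
        rw [div_pow, div_pow, div_mul_div_comm, div_mul_div_comm,
          div_le_div_iff₀ (by positivity) (by positivity)]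
        have h1 := stepA (x + Δx) (y' - 2) (y - 2) (by linarith) (by linarith) (by linarith)
        have h2 := stepB (y - 2) x (x + Δx) (by linarith) (by linarith) (by linarith)
        have H1 : (y'-2)^2 * y * (x^3 * (x + y - 2)) ≤ (y'-2)^2 * y * ((x+Δx)^3 * (x + Δx + y - 2)) := by
          apply mul_le_mul_of_nonneg_left _ (by positivity)
          calc x^3 * (x + y - 2) = x^3 * (x + (y-2)) := by ring
            _ ≤ (x+Δx)^3 * ((x+Δx) + (y-2)) := h2
            _ = (x+Δx)^3 * (x + Δx + y - 2) := by ring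
        have H2 : (x+Δx)^3 * ((y'-2)^2 * ((y-2+2) * ((x+Δx) + (y-2)))) ≤
            (x+Δx)^3 * ((y-2)^2 * ((y'-2+2) * ((x+Δx) + (y'-2)))) := by
          apply mul_le_mul_of_nonneg_left h1 (by positivity)
        have kp : (y'-2)^2 * (x^3 * y * (x + y - 2)) ≤ (y-2)^2 * ((x+Δx)^3 * y' * (x + Δx + y' - 2)) := by
          linarith [H1, H2]
        linarith [mul_le_mul_of_nonneg_right kp
          (show (0:ℝ) ≤ x * y * (x+Δx) * y' from le_of_lt
            (mul_pos (mul_pos (mul_pos (by linarith) (by linarith)) (by linarith)) (by linarith)))]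
      have hle := sqrt_div_le ((y' - 2) / ((x + Δx)^2 * y')) ((x + Δx + y' - 2) / ((x + Δx) * y'))
        ((y - 2) / (x^2 * y)) ((x + y - 2) / (x * y))
        (by apply div_nonneg (by linarith); positivity)
        (by apply div_nonneg (by linarith); positivity) hq hp hcond
      have expand : D x = ((y - 2) / (x^2 * y) / Real.sqrt ((x + y - 2) / (x * y)) -
          (y' - 2) / ((x + Δx)^2 * y') / Real.sqrt ((x + Δx + y' - 2) / ((x + Δx) * y'))) / 2 := by
        rw [hDdef]; ring
      rw [expand]; linarith
    have mono : MonotoneOn G (Set.Ici (2:ℝ)) := by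
      apply monotoneOn_of_deriv_nonneg (convex_Ici 2)
      · intro x hx; exact (hD x hx).continuousAt.continuousWithinAt
      · intro x hx
        exact (hD x (interior_subset hx)).differentiableAt.differentiableWithinAt
      · intro x hx
        rw [(hD x (interior_subset hx)).deriv]
        exact hDnn x (interior_subset hx)
    rw [hGg x1, hGg x2]
    exact mono (show x1 ∈ Set.Ici (2:ℝ) from hx1) (show x2 ∈ Set.Ici (2:ℝ) by exact hx1.trans hx12) hx12
  · intro x y1 y2 hx hy1 hy12 hΔyy hy1Δ
    set G : ℝ → ℝ := fun y => -Real.sqrt ((x + y - 2) / (x * y)) +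
      Real.sqrt ((x + Δx + (y - Δy) - 2) / ((x + Δx) * (y - Δy))) with hGdef
    have hGg : ∀ y, g x y = G y := by
      intro y; rw [hg, hf, hf]
    set D : ℝ → ℝ := fun y =>
      -((2 - x) / (y^2 * x) / (2 * Real.sqrt ((x + y - 2) / (x * y)))) +
      ((2 - (x + Δx)) / ((y - Δy)^2 * (x + Δx)) /
        (2 * Real.sqrt ((x + Δx + (y - Δy) - 2) / ((x + Δx) * (y - Δy))))) with hDdef
    have hD : ∀ y ∈ Set.Ici y1, HasDerivAt G (D y) y := by
      intro y hy
      have hy' : y1 ≤ y := hy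
      have h1 := deriv_aux2 x (by linarith) (show (0:ℝ) < y by linarith)
        (show (0:ℝ) < y + x - 2 by linarith)
      have h2 := deriv_aux2 (x + Δx) (by linarith) (show (0:ℝ) < y - Δy by linarith)
        (show (0:ℝ) < (y - Δy) + (x + Δx) - 2 by linarith)
      have hinner : HasDerivAt (fun y : ℝ => y - Δy) 1 y := (hasDerivAt_id y).sub_const Δy
      have h2' := h2.comp y hinner
      simp only [Function.comp, mul_one] at h2'
      exact h1.neg.add h2'
    have hDnp : ∀ y ∈ Set.Ici y1, D y ≤ 0 := by
      intro y hy
      have hy' : y1 ≤ y := hy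
      have hyΔ : (2:ℝ) ≤ y - Δy := by linarith
      have hp : (0:ℝ) < (x + y - 2) / (x * y) := by
        apply div_pos <;> nlinarith
      have hq : (0:ℝ) < (x + Δx + (y - Δy) - 2) / ((x + Δx) * (y - Δy)) := by
        apply div_pos <;> nlinarith
      have hcond : ((x - 2) / (y^2 * x))^2 * ((x + Δx + (y - Δy) - 2) / ((x + Δx) * (y - Δy))) ≤
          ((x + Δx - 2) / ((y - Δy)^2 * (x + Δx)))^2 * ((x + y - 2) / (x * y)) := by
        rw [div_pow, div_pow, div_mul_div_comm, div_mul_div_comm,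
          div_le_div_iff₀ (by apply_rules [mul_pos, pow_pos] <;> linarith)
            (by apply_rules [mul_pos, pow_pos] <;> linarith)]
        have h1 := stepA y (x - 2) (x + Δx - 2) (by linarith) (by linarith) (by linarith)
        have h2 := stepB (x + Δx - 2) (y - Δy) y (by linarith) (by linarith) (by linarith)
        have H1 : (x-2)^2 * (x+Δx) * ((y-Δy)^3 * ((y-Δy) + (x+Δx-2))) ≤
            (x-2)^2 * (x+Δx) * (y^3 * (y + (x+Δx-2))) := by
          exact mul_le_mul_of_nonneg_left h2 (mul_nonneg (sq_nonneg _) (by linarith))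
        have H2 : y^3 * ((x-2)^2 * ((x+Δx-2+2) * (y + (x+Δx-2)))) ≤
            y^3 * ((x+Δx-2)^2 * ((x-2+2) * (y + (x-2)))) := by
          exact mul_le_mul_of_nonneg_left h1 (pow_nonneg (by linarith) 3)
        have kp : (x-2)^2 * ((x+Δx) * (y-Δy)^3 * (x + Δx + (y-Δy) - 2)) ≤
            (x+Δx-2)^2 * (x * y^3 * (x + y - 2)) := by linarith [H1, H2]
        linarith [mul_le_mul_of_nonneg_right kp
          (show (0:ℝ) ≤ x * y * (x+Δx) * (y-Δy) from le_of_lt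
            (mul_pos (mul_pos (mul_pos (by linarith) (by linarith)) (by linarith)) (by linarith)))]
      have hle := sqrt_div_le ((x - 2) / (y^2 * x)) ((x + y - 2) / (x * y))
        ((x + Δx - 2) / ((y - Δy)^2 * (x + Δx))) ((x + Δx + (y - Δy) - 2) / ((x + Δx) * (y - Δy)))
        (by apply div_nonneg (by linarith); nlinarith)
        (by apply div_nonneg (by linarith); nlinarith) hp hq hcond
      have expand : D y = ((x + Δx - 2) / ((y - Δy)^2 * (x + Δx)) /
            Real.sqrt ((x + Δx + (y - Δy) - 2) / ((x + Δx) * (y - Δy))) -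
          (x - 2) / (y^2 * x) / Real.sqrt ((x + y - 2) / (x * y))) / (-2) := by
        rw [hDdef]; ring
      rw [expand]
      have : (x - 2) / (y^2 * x) / Real.sqrt ((x + y - 2) / (x * y)) ≤
          (x + Δx - 2) / ((y - Δy)^2 * (x + Δx)) /
            Real.sqrt ((x + Δx + (y - Δy) - 2) / ((x + Δx) * (y - Δy))) := hle
      linarith
    have anti : AntitoneOn G (Set.Ici y1) := by
      apply antitoneOn_of_deriv_nonpos (convex_Ici y1)
      · intro y hy; exact (hD y hy).continuousAt.continuousWithinAt
      · intro y hy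
        exact (hD y (interior_subset hy)).differentiableAt.differentiableWithinAt
      · intro y hy
        rw [(hD y (interior_subset hy)).deriv]
        exact hDnp y (interior_subset hy)
    rw [hGg y1, hGg y2]
    exact anti (show y1 ∈ Set.Ici y1 from le_refl y1) (show y2 ∈ Set.Ici y1 from hy12) hy12
end

section
/- Let f(x,y) = sqrt((x+y-2)/(xy)). For real numbers x ≥ 3 and y ≥ 2, the quantity -f(x,y) + f(x-1,y) is non-negative, increases in y, and decreases in x. -/
open Real

private lemma sqrt_sub_le {a b c d : ℝ} (ha : 0 < a) (hb : 0 ≤ b) (hc : 0 < c) (hd : 0 ≤ d)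
    (h : (a - b) * (Real.sqrt c + Real.sqrt d) ≤ (c - d) * (Real.sqrt a + Real.sqrt b)) :
    Real.sqrt a - Real.sqrt b ≤ Real.sqrt c - Real.sqrt d := by
  have hsa : 0 < Real.sqrt a := Real.sqrt_pos.2 ha
  have hsc : 0 < Real.sqrt c := Real.sqrt_pos.2 hc
  have hsb : 0 ≤ Real.sqrt b := Real.sqrt_nonneg b
  have hsd : 0 ≤ Real.sqrt d := Real.sqrt_nonneg d
  have ea : Real.sqrt a ^ 2 = a := Real.sq_sqrt ha.le
  have eb : Real.sqrt b ^ 2 = b := Real.sq_sqrt hb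
  have ec : Real.sqrt c ^ 2 = c := Real.sq_sqrt hc.le
  have ed : Real.sqrt d ^ 2 = d := Real.sq_sqrt hd
  have e1 : (Real.sqrt a - Real.sqrt b) * (Real.sqrt a + Real.sqrt b) = a - b := by
    linear_combination ea - eb
  have e2 : (Real.sqrt c - Real.sqrt d) * (Real.sqrt c + Real.sqrt d) = c - d := by
    linear_combination ec - ed
  rw [← e1, ← e2] at h
  nlinarith [mul_pos (by linarith : (0:ℝ) < Real.sqrt a + Real.sqrt b)
      (by linarith : (0:ℝ) < Real.sqrt c + Real.sqrt d), h]

private lemma key2 (x y : ℝ) (hx : 3 ≤ x) (hy : 2 ≤ y) :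
    x*(x-3)*Real.sqrt ((x+y-2)/(x*y)) ≤ (x-1)*(x-2)*Real.sqrt ((x+y-3)/((x-1)*y)) := by
  have hx0 : (0:ℝ) < x := by linarith
  have hx1 : (0:ℝ) < x - 1 := by linarith
  have hy0 : (0:ℝ) < y := by linarith
  have e1 : x*(x-3)*Real.sqrt ((x+y-2)/(x*y))
      = Real.sqrt ((x*(x-3))^2 * ((x+y-2)/(x*y))) := by
    rw [Real.sqrt_mul (sq_nonneg _), Real.sqrt_sq (by nlinarith)]
  have e2 : (x-1)*(x-2)*Real.sqrt ((x+y-3)/((x-1)*y))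
      = Real.sqrt (((x-1)*(x-2))^2 * ((x+y-3)/((x-1)*y))) := by
    rw [Real.sqrt_mul (sq_nonneg _), Real.sqrt_sq (by nlinarith)]
  rw [e1, e2]
  apply Real.sqrt_le_sqrt
  rw [mul_div_assoc', mul_div_assoc', div_le_div_iff₀ (by positivity) (by positivity)]
  have hp : x*(x-3)^2*(x+y-2) ≤ (x-1)*(x-2)^2*(x+y-3) := by
    nlinarith [mul_nonneg (by nlinarith : (0:ℝ) ≤ x^2-x-4) (by linarith : (0:ℝ) ≤ y-2),
      sq_nonneg (x-3)]
  nlinarith [mul_le_mul_of_nonneg_right hp (by positivity : (0:ℝ) ≤ x*(x-1)*y)]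

private lemma key3 (a b x y : ℝ) (ha : 3 ≤ a) (hax : a ≤ x) (hb : 3 ≤ b) (hy : 2 ≤ y) :
    (a-1)*(b-1)*Real.sqrt ((x+y-3)/((x-1)*y)) ≤ a*b*Real.sqrt ((x+y-2)/(x*y)) := by
  have hx : (3:ℝ) ≤ x := le_trans ha hax
  have hx0 : (0:ℝ) < x := by linarith
  have hx1 : (0:ℝ) < x-1 := by linarith
  have hy0 : (0:ℝ) < y := by linarith
  have e1 : (a-1)*(b-1)*Real.sqrt ((x+y-3)/((x-1)*y))
      = Real.sqrt (((a-1)*(b-1))^2 * ((x+y-3)/((x-1)*y))) := by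
    rw [Real.sqrt_mul (sq_nonneg _), Real.sqrt_sq (by nlinarith)]
  have e2 : a*b*Real.sqrt ((x+y-2)/(x*y))
      = Real.sqrt ((a*b)^2 * ((x+y-2)/(x*y))) := by
    rw [Real.sqrt_mul (sq_nonneg _), Real.sqrt_sq (by nlinarith)]
  rw [e1, e2]
  apply Real.sqrt_le_sqrt
  rw [mul_div_assoc', mul_div_assoc', div_le_div_iff₀ (by positivity) (by positivity)]
  have P1 : (a-1)^2*x^2 ≤ a^2*(x-1)^2 := by
    nlinarith [mul_nonneg (by linarith : (0:ℝ) ≤ a*(x-1)-(a-1)*x)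
      (by nlinarith : (0:ℝ) ≤ a*(x-1)+(a-1)*x)]
  have P2 : (b-1)^2 ≤ b^2 := by nlinarith
  have P3 : (x-1)*(x+y-3) ≤ x*(x+y-2) := by nlinarith
  have Q1 : (a-1)^2*x^2*((b-1)^2) ≤ a^2*(x-1)^2*(b^2) :=
    mul_le_mul P1 P2 (by positivity) (by positivity)
  have T' : (a-1)^2*x^2*((b-1)^2)*((x-1)*(x+y-3)) ≤ a^2*(x-1)^2*(b^2)*(x*(x+y-2)) :=
    mul_le_mul Q1 P3 (by nlinarith) (by positivity)
  nlinarith [mul_le_mul_of_nonneg_right T' hy0.le, mul_pos hx0 hx1]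

private lemma monoY (x y1 y2 : ℝ) (hx : 3 ≤ x) (hy1 : 2 ≤ y1) (h12 : y1 ≤ y2) :
    Real.sqrt ((x+y1-3)/((x-1)*y1)) - Real.sqrt ((x+y2-3)/((x-1)*y2))
      ≤ Real.sqrt ((x+y1-2)/(x*y1)) - Real.sqrt ((x+y2-2)/(x*y2)) := by
  have hx0 : (0:ℝ) < x := by linarith
  have hx1 : (0:ℝ) < x-1 := by linarith
  have hy10 : (0:ℝ) < y1 := by linarith
  have hy20 : (0:ℝ) < y2 := by linarith
  apply sqrt_sub_le (div_pos (by linarith) (by positivity))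
    (le_of_lt (div_pos (by linarith) (by positivity)))
    (div_pos (by linarith) (by positivity))
    (le_of_lt (div_pos (by linarith) (by positivity)))
  have hu : (x+y1-3)/((x-1)*y1) - (x+y2-3)/((x-1)*y2) = (x-3)*(y2-y1)/((x-1)*y1*y2) := by
    field_simp
    ring
  have hv : (x+y1-2)/(x*y1) - (x+y2-2)/(x*y2) = (x-2)*(y2-y1)/(x*y1*y2) := by
    field_simp
    ring
  rw [hu, hv, div_mul_eq_mul_div, div_mul_eq_mul_div,
    div_le_div_iff₀ (by positivity) (by positivity)]
  have S := add_le_add (key2 x y1 hx hy1) (key2 x y2 hx (by linarith))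
  nlinarith [mul_le_mul_of_nonneg_right S
    (mul_nonneg (by linarith : (0:ℝ) ≤ y2 - y1) (by positivity : (0:ℝ) ≤ y1*y2))]

private lemma monoX (x1 x2 y : ℝ) (hx1 : 3 ≤ x1) (h12 : x1 ≤ x2) (hy : 2 ≤ y) :
    Real.sqrt ((x1+y-2)/(x1*y)) - Real.sqrt ((x2+y-2)/(x2*y))
      ≤ Real.sqrt ((x1+y-3)/((x1-1)*y)) - Real.sqrt ((x2+y-3)/((x2-1)*y)) := by
  have hx2 : (3:ℝ) ≤ x2 := le_trans hx1 h12
  have hx10 : (0:ℝ) < x1 := by linarith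
  have hx20 : (0:ℝ) < x2 := by linarith
  have hx11 : (0:ℝ) < x1-1 := by linarith
  have hx21 : (0:ℝ) < x2-1 := by linarith
  have hy0 : (0:ℝ) < y := by linarith
  apply sqrt_sub_le (div_pos (by linarith) (by positivity))
    (le_of_lt (div_pos (by linarith) (by positivity)))
    (div_pos (by linarith) (by positivity))
    (le_of_lt (div_pos (by linarith) (by positivity)))
  have hv : (x1+y-2)/(x1*y) - (x2+y-2)/(x2*y) = (y-2)*(x2-x1)/(x1*x2*y) := by
    field_simp
    ring
  have hu : (x1+y-3)/((x1-1)*y) - (x2+y-3)/((x2-1)*y)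
      = (y-2)*(x2-x1)/((x1-1)*(x2-1)*y) := by
    field_simp
    ring
  rw [hu, hv, div_mul_eq_mul_div, div_mul_eq_mul_div,
    div_le_div_iff₀ (by positivity) (by positivity)]
  have S := add_le_add (key3 x1 x2 x1 y hx1 le_rfl hx2 hy) (key3 x1 x2 x2 y hx1 h12 hx2 hy)
  nlinarith [mul_le_mul_of_nonneg_right S
    (mul_nonneg (mul_nonneg (by linarith : (0:ℝ) ≤ y - 2) (by linarith : (0:ℝ) ≤ x2 - x1))
      hy0.le)]

theorem stmt5 (f : ℝ → ℝ → ℝ) (hf : ∀ x y, f x y = Real.sqrt ((x + y - 2) / (x * y))) :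
    (∀ x y : ℝ, 3 ≤ x → 2 ≤ y → 0 ≤ -f x y + f (x - 1) y) ∧
    (∀ x y1 y2 : ℝ, 3 ≤ x → 2 ≤ y1 → y1 ≤ y2 →
      -f x y1 + f (x - 1) y1 ≤ -f x y2 + f (x - 1) y2) ∧
    (∀ x1 x2 y : ℝ, 3 ≤ x1 → x1 ≤ x2 → 2 ≤ y →
      -f x2 y + f (x2 - 1) y ≤ -f x1 y + f (x1 - 1) y) := by
  have hmY : ∀ x y1 y2 : ℝ, 3 ≤ x → 2 ≤ y1 → y1 ≤ y2 →
      -f x y1 + f (x - 1) y1 ≤ -f x y2 + f (x - 1) y2 := by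
    intro x y1 y2 hx hy1 h12
    rw [hf, hf, hf, hf]
    have h := monoY x y1 y2 hx hy1 h12
    rw [show x-1+y1-2 = x+y1-3 by ring, show x-1+y2-2 = x+y2-3 by ring]
    linarith
  refine ⟨?_, hmY, ?_⟩
  · intro x y hx hy
    have h := hmY x 2 y hx le_rfl hy
    have hx0 : x ≠ 0 := by intro h0; rw [h0] at hx; norm_num at hx
    have hx1 : x - 1 ≠ 0 := by intro h0; nlinarith
    have e : f x 2 = f (x-1) 2 := by
      rw [hf, hf, show (x+2-2)/(x*2) = 1/2 by field_simp; ring,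
        show (x-1+2-2)/((x-1)*2) = 1/2 by field_simp; ring]
    linarith
  · intro x1 x2 y h1 h12 hy
    rw [hf, hf, hf, hf]
    have h := monoX x1 x2 y h1 h12 hy
    rw [show x1-1+y-2 = x1+y-3 by ring, show x2-1+y-2 = x2+y-3 by ring]
    linarith
end

section
/- Let f(x,y) = sqrt((x+y-2)/(xy)) and for real k ≥ 2 define g(x,k) = k(-f(x,6) + f(x+1,5)) + f(x+1,3). Then for every fixed k ≥ 2, g(x,k) is increasing in x on x ≥ 2. -/
open Real

private lemma le_of_sq_le_sq' (a b : ℝ) (ha : 0 ≤ a) (hb : 0 ≤ b) (h : a ^ 2 ≤ b ^ 2) :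
    a ≤ b := by nlinarith

private lemma hasDerivAtG (k x : ℝ) (hx : 2 ≤ x) :
    HasDerivAt (fun y : ℝ =>
        k * (-Real.sqrt ((y + 6 - 2) / (y * 6)) + Real.sqrt ((y + 1 + 5 - 2) / ((y + 1) * 5)))
          + Real.sqrt ((y + 1 + 3 - 2) / ((y + 1) * 3)))
      (k * (-((-2 / (3 * x ^ 2)) / (2 * Real.sqrt ((x + 6 - 2) / (x * 6))))
          + (-3 / (5 * (x + 1) ^ 2)) / (2 * Real.sqrt ((x + 1 + 5 - 2) / ((x + 1) * 5))))
        + (-1 / (3 * (x + 1) ^ 2)) / (2 * Real.sqrt ((x + 1 + 3 - 2) / ((x + 1) * 3)))) x := by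
  have hx0 : (0:ℝ) < x := by linarith
  have hx1 : (0:ℝ) < x + 1 := by linarith
  have hu : HasDerivAt (fun y : ℝ => (y + 6 - 2) / (y * 6)) (-2 / (3 * x ^ 2)) x := by
    have h1 : HasDerivAt (fun y : ℝ => y + 6 - 2) 1 x := by
      simpa using ((hasDerivAt_id x).add_const 6).sub_const 2
    have h2 : HasDerivAt (fun y : ℝ => y * 6) 6 x := by
      simpa using (hasDerivAt_id x).mul_const 6
    have h3 : HasDerivAt (fun y : ℝ => (y + 6 - 2) / (y * 6)) _ x := h1.div h2 (by positivity)
    convert h3 using 1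
    field_simp
    ring
  have hv : HasDerivAt (fun y : ℝ => (y + 1 + 5 - 2) / ((y + 1) * 5)) (-3 / (5 * (x + 1) ^ 2)) x := by
    have h1 : HasDerivAt (fun y : ℝ => y + 1 + 5 - 2) 1 x := by
      simpa using (((hasDerivAt_id x).add_const 1).add_const 5).sub_const 2
    have h2 : HasDerivAt (fun y : ℝ => (y + 1) * 5) 5 x := by
      simpa using ((hasDerivAt_id x).add_const 1).mul_const 5
    have h3 : HasDerivAt (fun y : ℝ => (y + 1 + 5 - 2) / ((y + 1) * 5)) _ x := h1.div h2 (by positivity)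
    convert h3 using 1
    field_simp
    ring
  have hw : HasDerivAt (fun y : ℝ => (y + 1 + 3 - 2) / ((y + 1) * 3)) (-1 / (3 * (x + 1) ^ 2)) x := by
    have h1 : HasDerivAt (fun y : ℝ => y + 1 + 3 - 2) 1 x := by
      simpa using (((hasDerivAt_id x).add_const 1).add_const 3).sub_const 2
    have h2 : HasDerivAt (fun y : ℝ => (y + 1) * 3) 3 x := by
      simpa using ((hasDerivAt_id x).add_const 1).mul_const 3
    have h3 : HasDerivAt (fun y : ℝ => (y + 1 + 3 - 2) / ((y + 1) * 3)) _ x := h1.div h2 (by positivity)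
    convert h3 using 1
    field_simp
    ring
  have hune : (x + 6 - 2) / (x * 6) ≠ 0 := by
    have : 0 < (x + 6 - 2) / (x * 6) := div_pos (by linarith) (by linarith)
    exact ne_of_gt this
  have hvne : (x + 1 + 5 - 2) / ((x + 1) * 5) ≠ 0 := by
    have : 0 < (x + 1 + 5 - 2) / ((x + 1) * 5) := div_pos (by linarith) (by linarith)
    exact ne_of_gt this
  have hwne : (x + 1 + 3 - 2) / ((x + 1) * 3) ≠ 0 := by
    have : 0 < (x + 1 + 3 - 2) / ((x + 1) * 3) := div_pos (by linarith) (by linarith)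
    exact ne_of_gt this
  exact (((hu.sqrt hune).neg.add (hv.sqrt hvne)).const_mul k).add (hw.sqrt hwne)

set_option maxHeartbeats 1000000 in
private lemma derivNonnegG (k x : ℝ) (hk : 2 ≤ k) (hx : 2 ≤ x) :
    0 ≤ k * (-((-2 / (3 * x ^ 2)) / (2 * Real.sqrt ((x + 6 - 2) / (x * 6))))
          + (-3 / (5 * (x + 1) ^ 2)) / (2 * Real.sqrt ((x + 1 + 5 - 2) / ((x + 1) * 5))))
        + (-1 / (3 * (x + 1) ^ 2)) / (2 * Real.sqrt ((x + 1 + 3 - 2) / ((x + 1) * 3))) := by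
  have hx0 : (0:ℝ) < x := by linarith
  have hx1 : (0:ℝ) < x + 1 := by linarith
  set P := Real.sqrt x with hPdef
  set Q := Real.sqrt (x + 1) with hQdef
  set R := Real.sqrt (x + 2) with hRdef
  set S := Real.sqrt (x + 4) with hSdef
  set e3 := Real.sqrt 3 with he3def
  set e5 := Real.sqrt 5 with he5def
  set e6 := Real.sqrt 6 with he6def
  have hP : 0 < P := Real.sqrt_pos.2 hx0
  have hQ : 0 < Q := Real.sqrt_pos.2 hx1
  have hR : 0 < R := Real.sqrt_pos.2 (by linarith)
  have hS : 0 < S := Real.sqrt_pos.2 (by linarith)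
  have h3 : 0 < e3 := Real.sqrt_pos.2 (by norm_num)
  have h5 : 0 < e5 := Real.sqrt_pos.2 (by norm_num)
  have h6 : 0 < e6 := Real.sqrt_pos.2 (by norm_num)
  have hP2 : P ^ 2 = x := Real.sq_sqrt hx0.le
  have hQ2 : Q ^ 2 = x + 1 := Real.sq_sqrt hx1.le
  have hR2 : R ^ 2 = x + 2 := Real.sq_sqrt (by linarith)
  have hS2 : S ^ 2 = x + 4 := Real.sq_sqrt (by linarith)
  have he3sq : e3 ^ 2 = 3 := Real.sq_sqrt (by norm_num)
  have he5sq : e5 ^ 2 = 5 := Real.sq_sqrt (by norm_num)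
  have he6sq : e6 ^ 2 = 6 := Real.sq_sqrt (by norm_num)
  -- rewrite the square roots of quotients
  have hA1 : Real.sqrt ((x + 6 - 2) / (x * 6)) = S / (P * e6) := by
    rw [show x + 6 - 2 = x + 4 by ring, Real.sqrt_div (by linarith : (0:ℝ) ≤ x + 4),
      Real.sqrt_mul hx0.le]
  have hB1 : Real.sqrt ((x + 1 + 5 - 2) / ((x + 1) * 5)) = S / (Q * e5) := by
    rw [show x + 1 + 5 - 2 = x + 4 by ring, Real.sqrt_div (by linarith : (0:ℝ) ≤ x + 4),
      Real.sqrt_mul hx1.le]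
  have hC1 : Real.sqrt ((x + 1 + 3 - 2) / ((x + 1) * 3)) = R / (Q * e3) := by
    rw [show x + 1 + 3 - 2 = x + 2 by ring, Real.sqrt_div (by linarith : (0:ℝ) ≤ x + 2),
      Real.sqrt_mul hx1.le]
  -- key inequalities
  have hD : 9 * e5 * P ^ 3 ≤ 10 * e6 * Q ^ 3 := by
    apply le_of_sq_le_sq' _ _ (by positivity) (by positivity)
    have h1 : (9 * e5 * P ^ 3) ^ 2 = 405 * x ^ 3 := by
      calc (9 * e5 * P ^ 3) ^ 2 = 81 * e5 ^ 2 * (P ^ 2) ^ 3 := by ring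
      _ = 405 * x ^ 3 := by rw [he5sq, hP2]; ring
    have h2 : (10 * e6 * Q ^ 3) ^ 2 = 600 * (x + 1) ^ 3 := by
      calc (10 * e6 * Q ^ 3) ^ 2 = 100 * e6 ^ 2 * (Q ^ 2) ^ 3 := by ring
      _ = 600 * (x + 1) ^ 3 := by rw [he6sq, hQ2]; ring
    rw [h1, h2]
    nlinarith [pow_nonneg hx0.le 3, pow_nonneg hx0.le 2, hx0.le, sq_nonneg x]
  have hkey : 18 * e5 * P ^ 3 * R + 5 * e3 * P ^ 3 * S ≤ 20 * e6 * Q ^ 3 * R := by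
    have h53 : e5 * e3 = Real.sqrt 15 := by
      rw [he5def, he3def, ← Real.sqrt_mul (by norm_num : (0:ℝ) ≤ 5)]
      norm_num
    set W := Real.sqrt 15 * R * S with hWdef
    have hW0 : 0 ≤ W := by positivity
    have hWsq : W ^ 2 = 15 * (x + 2) * (x + 4) := by
      rw [hWdef]
      rw [mul_pow, mul_pow, Real.sq_sqrt (by norm_num : (0:ℝ) ≤ 15), hR2, hS2]
    have hT0 : 0 ≤ 2400 * (x + 1) ^ 3 * (x + 2) - 1620 * x ^ 3 * (x + 2) - 75 * x ^ 3 * (x + 4) := by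
      linarith [pow_nonneg (by linarith : (0:ℝ) ≤ x - 2) 4,
        pow_nonneg (by linarith : (0:ℝ) ≤ x - 2) 3,
        pow_nonneg (by linarith : (0:ℝ) ≤ x - 2) 2, hx]
    have hstep : 180 * x ^ 3 * W ≤
        2400 * (x + 1) ^ 3 * (x + 2) - 1620 * x ^ 3 * (x + 2) - 75 * x ^ 3 * (x + 4) := by
      apply le_of_sq_le_sq' _ _ (by positivity) hT0
      have hLsq : (180 * x ^ 3 * W) ^ 2 = 486000 * x ^ 6 * (x + 2) * (x + 4) := by
        calc (180 * x ^ 3 * W) ^ 2 = 32400 * x ^ 6 * W ^ 2 := by ring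
        _ = 486000 * x ^ 6 * (x + 2) * (x + 4) := by rw [hWsq]; ring
      rw [hLsq]
      linarith [pow_nonneg hx0.le 8, pow_nonneg hx0.le 7, pow_nonneg hx0.le 6,
        pow_nonneg hx0.le 5, pow_nonneg hx0.le 4, pow_nonneg hx0.le 3,
        pow_nonneg hx0.le 2, hx0.le]
    apply le_of_sq_le_sq' _ _ (by positivity) (by positivity)
    have hLHS : (18 * e5 * P ^ 3 * R + 5 * e3 * P ^ 3 * S) ^ 2
        = 1620 * x ^ 3 * (x + 2) + 75 * x ^ 3 * (x + 4) + 180 * x ^ 3 * W := by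
      calc (18 * e5 * P ^ 3 * R + 5 * e3 * P ^ 3 * S) ^ 2
          = 324 * e5 ^ 2 * (P ^ 2) ^ 3 * R ^ 2 + 25 * e3 ^ 2 * (P ^ 2) ^ 3 * S ^ 2
            + 180 * (e5 * e3) * (P ^ 2) ^ 3 * (R * S) := by ring
      _ = 1620 * x ^ 3 * (x + 2) + 75 * x ^ 3 * (x + 4) + 180 * x ^ 3 * W := by
          rw [he5sq, he3sq, hP2, hR2, hS2, h53, hWdef]; ring
    have hRHS : (20 * e6 * Q ^ 3 * R) ^ 2 = 2400 * (x + 1) ^ 3 * (x + 2) := by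
      calc (20 * e6 * Q ^ 3 * R) ^ 2 = 400 * e6 ^ 2 * (Q ^ 2) ^ 3 * R ^ 2 := by ring
      _ = 2400 * (x + 1) ^ 3 * (x + 2) := by rw [he6sq, hQ2, hR2]; ring
    rw [hLHS, hRHS]
    linarith
  -- rewrite the goal
  rw [hA1, hB1, hC1, ← hQ2, ← hP2]
  have heq : k * (-((-2 / (3 * (P ^ 2) ^ 2)) / (2 * (S / (P * e6))))
        + (-3 / (5 * (Q ^ 2) ^ 2)) / (2 * (S / (Q * e5))))
        + (-1 / (3 * (Q ^ 2) ^ 2)) / (2 * (R / (Q * e3)))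
      = (k * (10 * e6 * Q ^ 3 * R - 9 * e5 * P ^ 3 * R) - 5 * e3 * P ^ 3 * S)
        / (30 * P ^ 3 * Q ^ 3 * R * S) := by
    field_simp
    ring
  rw [heq]
  apply div_nonneg _ (by positivity)
  have hD2 : 0 ≤ 10 * e6 * Q ^ 3 * R - 9 * e5 * P ^ 3 * R := by
    nlinarith [mul_le_mul_of_nonneg_right hD hR.le]
  nlinarith [mul_le_mul_of_nonneg_right hk hD2]

theorem stmt6 (f : ℝ → ℝ → ℝ) (hf : ∀ x y, f x y = Real.sqrt ((x + y - 2) / (x * y)))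
    (g : ℝ → ℝ → ℝ) (hg : ∀ x k, g x k = k * (-f x 6 + f (x + 1) 5) + f (x + 1) 3)
    (k : ℝ) (hk : 2 ≤ k) (x1 x2 : ℝ) (hx1 : 2 ≤ x1) (hx12 : x1 ≤ x2) :
    g x1 k ≤ g x2 k := by
  set G : ℝ → ℝ := fun y =>
    k * (-Real.sqrt ((y + 6 - 2) / (y * 6)) + Real.sqrt ((y + 1 + 5 - 2) / ((y + 1) * 5)))
      + Real.sqrt ((y + 1 + 3 - 2) / ((y + 1) * 3)) with hGdef
  have hGg : ∀ x, g x k = G x := by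
    intro x
    rw [hg, hf, hf, hf, hGdef]
  have hmono : MonotoneOn G (Set.Ici (2:ℝ)) := by
    apply monotoneOn_of_deriv_nonneg (convex_Ici 2)
    · intro x hx
      exact (hasDerivAtG k x hx).continuousAt.continuousWithinAt
    · intro x hx
      rw [interior_Ici] at hx
      exact (hasDerivAtG k x (le_of_lt hx)).differentiableAt.differentiableWithinAt
    · intro x hx
      rw [interior_Ici] at hx
      rw [(hasDerivAtG k x (le_of_lt hx)).deriv]
      exact derivNonnegG k x hk (le_of_lt hx)
  rw [hGg, hGg]
  exact hmono hx1 (le_trans hx1 hx12) hx12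
end

section
/- Let f(x,y) = sqrt((x+y-2)/(xy)). For every real u ≥ 3, the strict inequality -f(u,5) + f(u,6) > -f(u,4) + f(u,5) holds; equivalently, 2f(u,5) < f(u,4) + f(u,6), i.e., f(u,·) is strictly concave along the points 4, 5, 6. -/
open Real

theorem stmt9 (f : ℝ → ℝ → ℝ) (hf : ∀ x y, f x y = Real.sqrt ((x + y - 2) / (x * y)))
    (u : ℝ) (hu : 3 ≤ u) :
    -f u 4 + f u 5 < -f u 5 + f u 6 := by
  have hu0 : (0:ℝ) < u := by linarith
  rw [hf, hf, hf]
  set a := Real.sqrt ((u + 4 - 2) / (u * 4)) with ha_def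
  set b := Real.sqrt ((u + 5 - 2) / (u * 5)) with hb_def
  set c := Real.sqrt ((u + 6 - 2) / (u * 6)) with hc_def
  have ha0 : 0 ≤ a := Real.sqrt_nonneg _
  have hb0 : 0 ≤ b := Real.sqrt_nonneg _
  have hc0 : 0 ≤ c := Real.sqrt_nonneg _
  have ha2 : a ^ 2 = (u + 4 - 2) / (u * 4) := by
    rw [ha_def, Real.sq_sqrt]
    exact div_nonneg (by linarith) (by linarith)
  have hb2 : b ^ 2 = (u + 5 - 2) / (u * 5) := by
    rw [hb_def, Real.sq_sqrt]
    exact div_nonneg (by linarith) (by linarith)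
  have hc2 : c ^ 2 = (u + 6 - 2) / (u * 6) := by
    rw [hc_def, Real.sq_sqrt]
    exact div_nonneg (by linarith) (by linarith)
  have h1 : a ^ 2 * (4 * u) = u + 2 := by
    rw [ha2]; field_simp; ring
  have h2 : b ^ 2 * (5 * u) = u + 3 := by
    rw [hb2]; field_simp; ring
  have h3 : c ^ 2 * (6 * u) = u + 4 := by
    rw [hc2]; field_simp; ring
  have hac2 : (a * c) ^ 2 * (24 * u ^ 2) = (u + 2) * (u + 4) := by
    linear_combination (c ^ 2 * (6 * u)) * h1 + (u + 2) * h3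
  have hac0 : 0 ≤ a * c := mul_nonneg ha0 hc0
  have hstep : 23 * u + 74 < a * c * (120 * u) := by
    nlinarith [hac2, hac0, sq_nonneg (u - 3), mul_nonneg (mul_nonneg hac0 hu0.le) hu0.le,
      sq_nonneg (a * c * (120 * u) - (23 * u + 74)), sq_nonneg (a * c * (120 * u) + 23 * u + 74)]
  -- Show 2*b < a + c
  have key : 2 * b < a + c := by
    nlinarith [hstep, h1, h2, h3,
      mul_nonneg (by linarith : (0:ℝ) ≤ 2 * b + a + c) hu0.le, hu0]
  linarith
end

section
/- Let f(x,y) = sqrt((x+y-2)/(xy)) and define g(u) = 2(-f(u,6) + f(u,5)) + 2(-f(u,5) + f(u,4)) + f(u,4) - sqrt(1/2) for real u ≥ 6. Then g(u) < -0.02 for all u ≥ 6; in particular g(u) ≤ max(g(6), lim_{u→∞} g(u)) = lim_{u→∞} g(u) ≈ -0.0236034 < 0 for integer u ≥ 6. -/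
set_option maxHeartbeats 1000000

open Real

theorem stmt10 (f : ℝ → ℝ → ℝ) (hf : ∀ x y, f x y = Real.sqrt ((x + y - 2) / (x * y)))
    (g : ℝ → ℝ)
    (hg : ∀ u, g u = 2 * (-f u 6 + f u 5) + 2 * (-f u 5 + f u 4) + f u 4 - Real.sqrt (1 / 2))
    (u : ℝ) (hu : 6 ≤ u) :
    g u < -0.02 := by
  have hu0 : (0:ℝ) < u := by linarith
  have hgu : g u = 3 * Real.sqrt ((u + 4 - 2) / (u * 4))
      - 2 * Real.sqrt ((u + 6 - 2) / (u * 6)) - Real.sqrt (1/2) := by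
    rw [hg, hf, hf, hf]; ring
  set t : ℝ := 1/u with ht
  have ht0 : 0 < t := by positivity
  have hut : u * t = 1 := by rw [ht]; field_simp
  have ht6 : t ≤ 1/6 := by
    rw [ht, div_le_div_iff₀ hu0 (by norm_num)]; linarith
  -- rewrite arguments
  have e1 : (u + 4 - 2) / (u * 4) = (1 + 2*t) / 4 := by
    rw [div_eq_div_iff (by positivity) (by norm_num)]; nlinarith [hut]
  have e2 : (u + 6 - 2) / (u * 6) = (1 + 4*t) / 6 := by
    rw [div_eq_div_iff (by positivity) (by norm_num)]; nlinarith [hut]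
  rw [e1, e2] at hgu
  -- upper bound on first sqrt
  have hA : Real.sqrt ((1 + 2*t)/4) ≤ (1 + t - t^2/2 + t^3/2)/2 := by
    rw [show (1 + t - t^2/2 + t^3/2)/2 = Real.sqrt (((1 + t - t^2/2 + t^3/2)/2)^2) from
      (Real.sqrt_sq (by nlinarith)).symm]
    apply Real.sqrt_le_sqrt
    nlinarith [sq_nonneg t, sq_nonneg (t^2), sq_nonneg (t - t^2), pow_pos ht0 3, pow_pos ht0 4]
  -- lower bound on second sqrt
  have k1 : (0:ℝ) ≤ t * (1/6 - t) := mul_nonneg ht0.le (by linarith)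
  have k2 : (0:ℝ) ≤ t^3 * (1/6 - t) := mul_nonneg (pow_nonneg ht0.le 3) (by linarith)
  have hr0 : (0:ℝ) ≤ 1 + 2*t - 2*t^2 + 4*t^3 - 10*t^4 := by nlinarith [k1, k2, sq_nonneg t]
  have hs6 : (0:ℝ) < Real.sqrt 6 := Real.sqrt_pos.mpr (by norm_num)
  have hs6sq : Real.sqrt 6 ^ 2 = 6 := Real.sq_sqrt (by norm_num)
  have hs6lb : (2.449489:ℝ) ≤ Real.sqrt 6 := by nlinarith
  have hs6ub : Real.sqrt 6 ≤ 2.449491 := by nlinarith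
  have hB : (1 + 2*t - 2*t^2 + 4*t^3 - 10*t^4) / Real.sqrt 6 ≤ Real.sqrt ((1 + 4*t)/6) := by
    rw [show ((1:ℝ) + 4*t)/6 = ((1 + 4*t)/6) from rfl]
    rw [show (1 + 2*t - 2*t^2 + 4*t^3 - 10*t^4) / Real.sqrt 6
        = Real.sqrt (((1 + 2*t - 2*t^2 + 4*t^3 - 10*t^4) / Real.sqrt 6)^2) from
      (Real.sqrt_sq (by positivity)).symm]
    apply Real.sqrt_le_sqrt
    rw [div_pow, hs6sq]
    rw [div_le_div_iff₀ (by norm_num) (by norm_num)]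
    nlinarith [pow_pos ht0 3, pow_pos ht0 4, sq_nonneg (t^2 - t^3), sq_nonneg (t^3), mul_pos ht0 (mul_pos ht0 ht0)]
  -- bound on sqrt(1/2)
  have hC : (0.707106:ℝ) ≤ Real.sqrt (1/2) := by
    rw [show (0.707106:ℝ) = Real.sqrt (0.707106^2) from (Real.sqrt_sq (by norm_num)).symm]
    apply Real.sqrt_le_sqrt; norm_num
  -- combine
  have hdiv : (1 + 2*t - 2*t^2 + 4*t^3 - 10*t^4) * 0.408248
      ≤ (1 + 2*t - 2*t^2 + 4*t^3 - 10*t^4) / Real.sqrt 6 := by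
    rw [le_div_iff₀ hs6]
    nlinarith [hr0, hs6ub]
  rw [hgu]
  have key : 3 * ((1 + t - t^2/2 + t^3/2)/2)
      - 2 * ((1 + 2*t - 2*t^2 + 4*t^3 - 10*t^4) * 0.408248) - 0.707106 < -0.02 := by
    nlinarith [k1, k2]
  linarith [hA, hB, hC, hdiv, key]
end

section
/- Let f(x,y) = sqrt((x+y-2)/(xy)) and define g(u) = -f(u,6) + f(u,5) + 3(-f(u,5) + f(u,4)) + f(u,4) - sqrt(1/2) for real u ≥ 6. Then g(u) < 0 for all u ≥ 6; more precisely max(g(6), lim_{u→∞} g(u)) ≈ -0.00978226 < 0. -/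
open Real

set_option maxHeartbeats 1000000

theorem stmt11 (f : ℝ → ℝ → ℝ) (hf : ∀ x y, f x y = Real.sqrt ((x + y - 2) / (x * y)))
    (g : ℝ → ℝ)
    (hg : ∀ u, g u = -f u 6 + f u 5 + 3 * (-f u 5 + f u 4) + f u 4 - Real.sqrt (1 / 2))
    (u : ℝ) (hu : 6 ≤ u) :
    g u < 0 := by
  have hu0 : (0:ℝ) < u := by linarith
  have hune : u ≠ 0 := ne_of_gt hu0
  set t : ℝ := 1 / u with ht
  have ht0 : 0 < t := by positivity
  have ht6 : t ≤ 1 / 6 := by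
    rw [ht]
    apply div_le_div_of_nonneg_left (by norm_num) (by norm_num) hu
  have ht2 : t^2 ≤ 1/36 := by nlinarith
  have ht3 : t^3 ≤ 1/216 := by nlinarith
  have ht4 : t^4 ≤ 1/1296 := by nlinarith [pow_pos ht0 2, pow_pos ht0 3]
  -- upper bound for sqrt((u+2)/(4u)) = sqrt((1+2t)/4)
  have h4 : Real.sqrt ((u + 4 - 2) / (u * 4)) ≤ (1 + t - t^2/2 + t^3/2) / 2 := by
    rw [Real.sqrt_le_iff]
    refine ⟨by nlinarith, ?_⟩
    have harg : (u + 4 - 2) / (u * 4) = (1 + 2*t) / 4 := by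
      rw [ht]; field_simp; ring
    rw [harg]
    nlinarith [sq_nonneg ((t - 1) * t^2), pow_nonneg ht0.le 4]
  -- lower bound for sqrt((u+3)/(5u)) = sqrt((1+3t)/5)
  have h5 : (44721/100000 : ℝ) * (1 + 3/2*t - 9/8*t^2 + 27/16*t^3 - 4*t^4)
      ≤ Real.sqrt ((u + 5 - 2) / (u * 5)) := by
    have hq : (0:ℝ) ≤ 1 + 3/2*t - 9/8*t^2 + 27/16*t^3 - 4*t^4 := by nlinarith
    rw [Real.le_sqrt (by positivity)
      (div_nonneg (by linarith) (by nlinarith))]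
    have harg : (u + 5 - 2) / (u * 5) = (1 + 3*t) / 5 := by
      rw [ht]; field_simp; ring
    rw [harg]
    have hr3 : (-107/64 : ℝ) - 1011/64*t + 3033/256*t^2 - 27/2*t^3 + 16*t^4 ≤ 0 := by
      nlinarith [pow_pos ht0 3]
    have hq2 : (1 + 3/2*t - 9/8*t^2 + 27/16*t^3 - 4*t^4)^2 ≤ 1 + 3*t := by
      nlinarith [mul_nonpos_of_nonneg_of_nonpos (pow_nonneg ht0.le 4) hr3]
    nlinarith [hq2]
  -- lower bound for sqrt((u+4)/(6u)) = sqrt((1+4t)/6)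
  have h6 : (40824/100000 : ℝ) * (1 + 2*t - 2*t^2 + 4*t^3 - 10*t^4)
      ≤ Real.sqrt ((u + 6 - 2) / (u * 6)) := by
    have hq : (0:ℝ) ≤ 1 + 2*t - 2*t^2 + 4*t^3 - 10*t^4 := by nlinarith
    rw [Real.le_sqrt (by positivity)
      (div_nonneg (by linarith) (by nlinarith))]
    have harg : (u + 6 - 2) / (u * 6) = (1 + 4*t) / 6 := by
      rw [ht]; field_simp; ring
    rw [harg]
    have hr4 : (-56 : ℝ) + 56*t - 80*t^2 + 100*t^3 ≤ 0 := by nlinarith [sq_nonneg t, ht6, ht3]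
    have hq2 : (1 + 2*t - 2*t^2 + 4*t^3 - 10*t^4)^2 ≤ 1 + 4*t := by
      nlinarith [mul_nonpos_of_nonneg_of_nonpos (pow_nonneg ht0.le 5) hr4]
    nlinarith [hq2]
  -- lower bound for sqrt(1/2)
  have h2 : (70710/100000 : ℝ) ≤ Real.sqrt (1/2) := by
    rw [Real.le_sqrt (by norm_num) (by norm_num)]
    norm_num
  -- the polynomial upper bound is negative
  have hQ : (0:ℝ) < 3256481/4800000 - 692491/800000*t + 95751/12500*t^2 := by
    nlinarith [sq_nonneg (t - 565/10000)]
  have hh : (-15811/100000 : ℝ) + 329081/400000*t - 342767/160000*t^2 + 95751/12500*t^3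
      ≤ -1297087/28800000 := by
    nlinarith [mul_nonneg (by linarith : (0:ℝ) ≤ 1/6 - t) hQ.le]
  have key : (1 + t - t^2/2 + t^3/2) * 2
      - 2 * ((44721/100000 : ℝ) * (1 + 3/2*t - 9/8*t^2 + 27/16*t^3 - 4*t^4))
      - (40824/100000 : ℝ) * (1 + 2*t - 2*t^2 + 4*t^3 - 10*t^4)
      - (70710/100000 : ℝ) < 0 := by
    nlinarith [mul_nonpos_of_nonneg_of_nonpos ht0.le (by linarith :
      (-15811/100000 : ℝ) + 329081/400000*t - 342767/160000*t^2 + 95751/12500*t^3 ≤ 0)]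
  rw [hg]
  simp only [hf]
  linarith [h4, h5, h6, h2, key]
end

section
/- For real numbers x ≥ 2 and y ≥ 2, the inequality (x+1)(x-2)^2 (x+y-1) < x(x-1)^2 (x+y-2) holds whenever x > 2; for x = 2 the left side is 0 and the right side is positive when y > 2. -/
theorem stmt14 (x y : ℝ) (hx : 2 ≤ x) (hy : 2 ≤ y) :
    (2 < x → (x + 1) * (x - 2) ^ 2 * (x + y - 1) < x * (x - 1) ^ 2 * (x + y - 2)) ∧
    (x = 2 → (x + 1) * (x - 2) ^ 2 * (x + y - 1) = 0 ∧
      (2 < y → 0 < x * (x - 1) ^ 2 * (x + y - 2))) := by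
  constructor
  · intro h
    nlinarith [sq_nonneg (x-2), sq_nonneg (x-1), mul_pos (sub_pos.2 h) (sub_pos.2 h), sq_nonneg (x*y - 2*x), mul_nonneg (sub_nonneg.2 hy) (sub_nonneg.2 hx), sq_nonneg x]
  · intro h
    subst h
    constructor
    · ring
    · intro hy2; nlinarith
end

section
/- Let f(x,y) = sqrt((x+y-2)/(xy)). For every real u ≥ 5, the function u ↦ -f(u,u) + f(u+1,u) is increasing in u and satisfies -f(u,u) + f(u+1,u) < 0; its supremum (limit as u → ∞) equals 0. -/
open Real Filter
lemma key1 (a b : ℝ) (ha : 5 ≤ a) (hab : a ≤ b) :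
    (b-2)^2*(a^3*(a+1)*(2*a-1)) ≤ (a-2)^2*(b^3*(b+1)*(2*b-1)) := by
  have hs : (0:ℝ) ≤ a - 5 := by linarith
  have ht : (0:ℝ) ≤ b - a := by linarith
  have hid : (a-2)^2*(b^3*(b+1)*(2*b-1)) - ((b-2)^2*(a^3*(a+1)*(2*a-1))) = 19575*((a-5)^0*(b-a)^1) + 16965*((a-5)^0*(b-a)^2) + 4671*((a-5)^0*(b-a)^3) + 459*((a-5)^0*(b-a)^4) + 18*((a-5)^0*(b-a)^5) + 33930*((a-5)^1*(b-a)^1) + 23148*((a-5)^1*(b-a)^2) + 4950*((a-5)^1*(b-a)^3) + 396*((a-5)^1*(b-a)^4) + 12*((a-5)^1*(b-a)^5) + 23148*((a-5)^2*(b-a)^1) + 12096*((a-5)^2*(b-a)^2) + 1923*((a-5)^2*(b-a)^3) + 111*((a-5)^2*(b-a)^4) + 2*((a-5)^2*(b-a)^5) + 8064*((a-5)^3*(b-a)^1) + 3054*((a-5)^3*(b-a)^2) + 324*((a-5)^3*(b-a)^3) + 10*((a-5)^3*(b-a)^4) + 1527*((a-5)^4*(b-a)^1) + 375*((a-5)^4*(b-a)^2)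 + 20*((a-5)^4*(b-a)^3) + 150*((a-5)^5*(b-a)^1) + 18*((a-5)^5*(b-a)^2) + 6*((a-5)^6*(b-a)^1) := by ring
  have h0 : (0:ℝ) ≤ (a-5)^0*(b-a)^1 := mul_nonneg (pow_nonneg hs 0) (pow_nonneg ht 1)
  have h1 : (0:ℝ) ≤ (a-5)^0*(b-a)^2 := mul_nonneg (pow_nonneg hs 0) (pow_nonneg ht 2)
  have h2 : (0:ℝ) ≤ (a-5)^0*(b-a)^3 := mul_nonneg (pow_nonneg hs 0) (pow_nonneg ht 3)
  have h3 : (0:ℝ) ≤ (a-5)^0*(b-a)^4 := mul_nonneg (pow_nonneg hs 0) (pow_nonneg ht 4)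
  have h4 : (0:ℝ) ≤ (a-5)^0*(b-a)^5 := mul_nonneg (pow_nonneg hs 0) (pow_nonneg ht 5)
  have h5 : (0:ℝ) ≤ (a-5)^1*(b-a)^1 := mul_nonneg (pow_nonneg hs 1) (pow_nonneg ht 1)
  have h6 : (0:ℝ) ≤ (a-5)^1*(b-a)^2 := mul_nonneg (pow_nonneg hs 1) (pow_nonneg ht 2)
  have h7 : (0:ℝ) ≤ (a-5)^1*(b-a)^3 := mul_nonneg (pow_nonneg hs 1) (pow_nonneg ht 3)
  have h8 : (0:ℝ) ≤ (a-5)^1*(b-a)^4 := mul_nonneg (pow_nonneg hs 1) (pow_nonneg ht 4)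
  have h9 : (0:ℝ) ≤ (a-5)^1*(b-a)^5 := mul_nonneg (pow_nonneg hs 1) (pow_nonneg ht 5)
  have h10 : (0:ℝ) ≤ (a-5)^2*(b-a)^1 := mul_nonneg (pow_nonneg hs 2) (pow_nonneg ht 1)
  have h11 : (0:ℝ) ≤ (a-5)^2*(b-a)^2 := mul_nonneg (pow_nonneg hs 2) (pow_nonneg ht 2)
  have h12 : (0:ℝ) ≤ (a-5)^2*(b-a)^3 := mul_nonneg (pow_nonneg hs 2) (pow_nonneg ht 3)
  have h13 : (0:ℝ) ≤ (a-5)^2*(b-a)^4 := mul_nonneg (pow_nonneg hs 2) (pow_nonneg ht 4)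
  have h14 : (0:ℝ) ≤ (a-5)^2*(b-a)^5 := mul_nonneg (pow_nonneg hs 2) (pow_nonneg ht 5)
  have h15 : (0:ℝ) ≤ (a-5)^3*(b-a)^1 := mul_nonneg (pow_nonneg hs 3) (pow_nonneg ht 1)
  have h16 : (0:ℝ) ≤ (a-5)^3*(b-a)^2 := mul_nonneg (pow_nonneg hs 3) (pow_nonneg ht 2)
  have h17 : (0:ℝ) ≤ (a-5)^3*(b-a)^3 := mul_nonneg (pow_nonneg hs 3) (pow_nonneg ht 3)
  have h18 : (0:ℝ) ≤ (a-5)^3*(b-a)^4 := mul_nonneg (pow_nonneg hs 3) (pow_nonneg ht 4)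
  have h19 : (0:ℝ) ≤ (a-5)^4*(b-a)^1 := mul_nonneg (pow_nonneg hs 4) (pow_nonneg ht 1)
  have h20 : (0:ℝ) ≤ (a-5)^4*(b-a)^2 := mul_nonneg (pow_nonneg hs 4) (pow_nonneg ht 2)
  have h21 : (0:ℝ) ≤ (a-5)^4*(b-a)^3 := mul_nonneg (pow_nonneg hs 4) (pow_nonneg ht 3)
  have h22 : (0:ℝ) ≤ (a-5)^5*(b-a)^1 := mul_nonneg (pow_nonneg hs 5) (pow_nonneg ht 1)
  have h23 : (0:ℝ) ≤ (a-5)^5*(b-a)^2 := mul_nonneg (pow_nonneg hs 5) (pow_nonneg ht 2)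
  have h24 : (0:ℝ) ≤ (a-5)^6*(b-a)^1 := mul_nonneg (pow_nonneg hs 6) (pow_nonneg ht 1)
  linarith [hid, h0, h1, h2, h3, h4, h5, h6, h7, h8, h9, h10, h11, h12, h13, h14, h15, h16, h17, h18, h19, h20, h21, h22, h23, h24]

lemma key2_s15 (a b : ℝ) (ha : 5 ≤ a) (hab : a ≤ b) :
    (b-2)^2*(a^2*(a+1)^2*(2*a-2)) ≤ (a-2)^2*(b^2*(b+1)^2*(2*b-2)) := by
  have hs : (0:ℝ) ≤ a - 5 := by linarith
  have ht : (0:ℝ) ≤ b - a := by linarith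
  have hid : (a-2)^2*(b^2*(b+1)^2*(2*b-2)) - ((b-2)^2*(a^2*(a+1)^2*(2*a-2))) = 20520*((a-5)^0*(b-a)^1) + 17712*((a-5)^0*(b-a)^2) + 4842*((a-5)^0*(b-a)^3) + 468*((a-5)^0*(b-a)^4) + 18*((a-5)^0*(b-a)^5) + 35424*((a-5)^1*(b-a)^1) + 24054*((a-5)^1*(b-a)^2) + 5100*((a-5)^1*(b-a)^3) + 402*((a-5)^1*(b-a)^4) + 12*((a-5)^1*(b-a)^5) + 24054*((a-5)^2*(b-a)^1) + 12492*((a-5)^2*(b-a)^2) + 1966*((a-5)^2*(b-a)^3) + 112*((a-5)^2*(b-a)^4) + 2*((a-5)^2*(b-a)^5) + 8328*((a-5)^3*(b-a)^1) + 3128*((a-5)^3*(b-a)^2) + 328*((a-5)^3*(b-a)^3) + 10*((a-5)^3*(b-a)^4) + 1564*((a-5)^4*(b-a)^1) + 380*((a-5)^4*(b-a)^2) + 20*((a-5)^4*(b-a)^3) + 152*((a-5)^5*(b-a)^1) + 18*((a-5)^5*(b-a)^2) + 6*((a-5)^6*(b-a)^1) := by ring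
  have h0 : (0:ℝ) ≤ (a-5)^0*(b-a)^1 := mul_nonneg (pow_nonneg hs 0) (pow_nonneg ht 1)
  have h1 : (0:ℝ) ≤ (a-5)^0*(b-a)^2 := mul_nonneg (pow_nonneg hs 0) (pow_nonneg ht 2)
  have h2 : (0:ℝ) ≤ (a-5)^0*(b-a)^3 := mul_nonneg (pow_nonneg hs 0) (pow_nonneg ht 3)
  have h3 : (0:ℝ) ≤ (a-5)^0*(b-a)^4 := mul_nonneg (pow_nonneg hs 0) (pow_nonneg ht 4)
  have h4 : (0:ℝ) ≤ (a-5)^0*(b-a)^5 := mul_nonneg (pow_nonneg hs 0) (pow_nonneg ht 5)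
  have h5 : (0:ℝ) ≤ (a-5)^1*(b-a)^1 := mul_nonneg (pow_nonneg hs 1) (pow_nonneg ht 1)
  have h6 : (0:ℝ) ≤ (a-5)^1*(b-a)^2 := mul_nonneg (pow_nonneg hs 1) (pow_nonneg ht 2)
  have h7 : (0:ℝ) ≤ (a-5)^1*(b-a)^3 := mul_nonneg (pow_nonneg hs 1) (pow_nonneg ht 3)
  have h8 : (0:ℝ) ≤ (a-5)^1*(b-a)^4 := mul_nonneg (pow_nonneg hs 1) (pow_nonneg ht 4)
  have h9 : (0:ℝ) ≤ (a-5)^1*(b-a)^5 := mul_nonneg (pow_nonneg hs 1) (pow_nonneg ht 5)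
  have h10 : (0:ℝ) ≤ (a-5)^2*(b-a)^1 := mul_nonneg (pow_nonneg hs 2) (pow_nonneg ht 1)
  have h11 : (0:ℝ) ≤ (a-5)^2*(b-a)^2 := mul_nonneg (pow_nonneg hs 2) (pow_nonneg ht 2)
  have h12 : (0:ℝ) ≤ (a-5)^2*(b-a)^3 := mul_nonneg (pow_nonneg hs 2) (pow_nonneg ht 3)
  have h13 : (0:ℝ) ≤ (a-5)^2*(b-a)^4 := mul_nonneg (pow_nonneg hs 2) (pow_nonneg ht 4)
  have h14 : (0:ℝ) ≤ (a-5)^2*(b-a)^5 := mul_nonneg (pow_nonneg hs 2) (pow_nonneg ht 5)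
  have h15 : (0:ℝ) ≤ (a-5)^3*(b-a)^1 := mul_nonneg (pow_nonneg hs 3) (pow_nonneg ht 1)
  have h16 : (0:ℝ) ≤ (a-5)^3*(b-a)^2 := mul_nonneg (pow_nonneg hs 3) (pow_nonneg ht 2)
  have h17 : (0:ℝ) ≤ (a-5)^3*(b-a)^3 := mul_nonneg (pow_nonneg hs 3) (pow_nonneg ht 3)
  have h18 : (0:ℝ) ≤ (a-5)^3*(b-a)^4 := mul_nonneg (pow_nonneg hs 3) (pow_nonneg ht 4)
  have h19 : (0:ℝ) ≤ (a-5)^4*(b-a)^1 := mul_nonneg (pow_nonneg hs 4) (pow_nonneg ht 1)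
  have h20 : (0:ℝ) ≤ (a-5)^4*(b-a)^2 := mul_nonneg (pow_nonneg hs 4) (pow_nonneg ht 2)
  have h21 : (0:ℝ) ≤ (a-5)^4*(b-a)^3 := mul_nonneg (pow_nonneg hs 4) (pow_nonneg ht 3)
  have h22 : (0:ℝ) ≤ (a-5)^5*(b-a)^1 := mul_nonneg (pow_nonneg hs 5) (pow_nonneg ht 1)
  have h23 : (0:ℝ) ≤ (a-5)^5*(b-a)^2 := mul_nonneg (pow_nonneg hs 5) (pow_nonneg ht 2)
  have h24 : (0:ℝ) ≤ (a-5)^6*(b-a)^1 := mul_nonneg (pow_nonneg hs 6) (pow_nonneg ht 1)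
  linarith [hid, h0, h1, h2, h3, h4, h5, h6, h7, h8, h9, h10, h11, h12, h13, h14, h15, h16, h17, h18, h19, h20, h21, h22, h23, h24]


lemma sqrt_mul_eq (c x : ℝ) (hc : 0 ≤ c) : c * Real.sqrt x = Real.sqrt (c^2 * x) := by
  rw [Real.sqrt_mul (by positivity) x, Real.sqrt_sq hc]

lemma repr_lemma (u : ℝ) (hu : 5 ≤ u) :
    -Real.sqrt ((u + u - 2)/(u*u)) + Real.sqrt ((u + 1 + u - 2)/((u+1)*u))
      = (2 - u) / (Real.sqrt (u^3*(u+1)*(2*u-1)) + Real.sqrt (u^2*(u+1)^2*(2*u-2))) := by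
  have hu0 : (0:ℝ) < u := by linarith
  have hu1 : (0:ℝ) < u + 1 := by linarith
  set A := Real.sqrt ((u + 1 + u - 2)/((u+1)*u)) with hA
  set B := Real.sqrt ((u + u - 2)/(u*u)) with hB
  have hAnn : 0 ≤ A := Real.sqrt_nonneg _
  have hBnn : 0 ≤ B := Real.sqrt_nonneg _
  have hA2 : A^2 = (u + 1 + u - 2)/((u+1)*u) :=
    Real.sq_sqrt (div_nonneg (by linarith) (by positivity))
  have hB2 : B^2 = (u + u - 2)/(u*u) :=
    Real.sq_sqrt (div_nonneg (by linarith) (by positivity))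
  have hDA : Real.sqrt (u^3*(u+1)*(2*u-1)) = (u^2*(u+1)) * A := by
    rw [hA, sqrt_mul_eq _ _ (by positivity)]
    congr 1
    field_simp
    ring
  have hDB : Real.sqrt (u^2*(u+1)^2*(2*u-2)) = (u^2*(u+1)) * B := by
    rw [hB, sqrt_mul_eq _ _ (by positivity)]
    congr 1
    field_simp
    ring
  have hBpos : 0 < B := by
    rw [hB]
    exact Real.sqrt_pos.2 (div_pos (by linarith) (by positivity))
  have hDpos : 0 < (u^2*(u+1)) * A + (u^2*(u+1)) * B := by
    have : 0 < (u^2*(u+1)) * B := by positivity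
    nlinarith [mul_nonneg (by positivity : (0:ℝ) ≤ u^2*(u+1)) hAnn]
  rw [hDA, hDB, eq_div_iff (ne_of_gt hDpos)]
  have key : (A - B) * (A + B) = A^2 - B^2 := by ring
  have hdiff : A^2 - B^2 = (2 - u)/(u^2*(u+1)) := by
    rw [hA2, hB2]
    field_simp
    ring
  have expand : (-B + A) * ((u^2*(u+1)) * A + (u^2*(u+1)) * B) = (u^2*(u+1)) * ((A - B)*(A+B)) := by ring
  rw [expand, key, hdiff]
  field_simp

lemma Dpos (u : ℝ) (hu : 5 ≤ u) :
    0 < Real.sqrt (u^3*(u+1)*(2*u-1)) + Real.sqrt (u^2*(u+1)^2*(2*u-2)) := by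
  have hu0 : (0:ℝ) < u := by linarith
  have h1 : 0 < Real.sqrt (u^3*(u+1)*(2*u-1)) :=
    Real.sqrt_pos.2 (mul_pos (mul_pos (by positivity) (by linarith)) (by linarith))
  have h2 : 0 ≤ Real.sqrt (u^2*(u+1)^2*(2*u-2)) := Real.sqrt_nonneg _
  linarith

theorem stmt15 (f : ℝ → ℝ → ℝ) (hf : ∀ x y, f x y = Real.sqrt ((x + y - 2) / (x * y))) :
    (∀ u1 u2 : ℝ, 5 ≤ u1 → u1 ≤ u2 → -f u1 u1 + f (u1 + 1) u1 ≤ -f u2 u2 + f (u2 + 1) u2) ∧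
    (∀ u : ℝ, 5 ≤ u → -f u u + f (u + 1) u < 0) ∧
    Filter.Tendsto (fun u : ℝ => -f u u + f (u + 1) u) Filter.atTop (nhds 0) := by
  have hrep : ∀ u : ℝ, 5 ≤ u → -f u u + f (u + 1) u
      = (2 - u) / (Real.sqrt (u^3*(u+1)*(2*u-1)) + Real.sqrt (u^2*(u+1)^2*(2*u-2))) := by
    intro u hu
    rw [hf, hf]
    exact repr_lemma u hu
  refine ⟨?_, ?_, ?_⟩
  · intro a b ha hab
    have hb : 5 ≤ b := le_trans ha hab
    rw [hrep a ha, hrep b hb]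
    have hDa := Dpos a ha
    have hDb := Dpos b hb
    rw [div_le_div_iff₀ hDa hDb]
    have e1 : (b-2) * Real.sqrt (a^3*(a+1)*(2*a-1)) ≤ (a-2) * Real.sqrt (b^3*(b+1)*(2*b-1)) := by
      rw [sqrt_mul_eq _ _ (by linarith), sqrt_mul_eq _ _ (by linarith)]
      exact Real.sqrt_le_sqrt (key1 a b ha hab)
    have e2 : (b-2) * Real.sqrt (a^2*(a+1)^2*(2*a-2)) ≤ (a-2) * Real.sqrt (b^2*(b+1)^2*(2*b-2)) := by
      rw [sqrt_mul_eq _ _ (by linarith), sqrt_mul_eq _ _ (by linarith)]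
      exact Real.sqrt_le_sqrt (key2_s15 a b ha hab)
    nlinarith [e1, e2]
  · intro u hu
    rw [hrep u hu]
    exact div_neg_of_neg_of_pos (by linarith) (Dpos u hu)
  · have ti : Tendsto (fun u : ℝ => u⁻¹) atTop (nhds 0) := tendsto_inv_atTop_zero
    have h1 : Tendsto (fun u : ℝ => (u + u - 2)/(u*u)) atTop (nhds 0) := by
      have ha : Tendsto (fun u : ℝ => 2 * u⁻¹ - 2 * (u⁻¹ * u⁻¹)) atTop (nhds 0) := by
        have t1 := ti.const_mul 2
        have t2 := (ti.mul ti).const_mul 2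
        simpa using t1.sub t2
      refine ha.congr' ?_
      filter_upwards [eventually_gt_atTop (0:ℝ)] with u hu
      field_simp
      ring
    have h2 : Tendsto (fun u : ℝ => (u + 1 + u - 2)/((u+1)*u)) atTop (nhds 0) := by
      have tj : Tendsto (fun u : ℝ => (u+1)⁻¹) atTop (nhds 0) :=
        tendsto_inv_atTop_zero.comp (tendsto_atTop_add_const_right _ 1 tendsto_id)
      have ha : Tendsto (fun u : ℝ => 2 * u⁻¹ - 3 * ((u+1)⁻¹ * u⁻¹)) atTop (nhds 0) := by
        have t1 := ti.const_mul 2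
        have t2 := (tj.mul ti).const_mul 3
        simpa using t1.sub t2
      refine ha.congr' ?_
      filter_upwards [eventually_gt_atTop (0:ℝ)] with u hu
      have h1 : u + 1 ≠ 0 := by positivity
      field_simp
      ring
    have hsq : Tendsto Real.sqrt (nhds 0) (nhds 0) := by
      simpa using (Real.continuous_sqrt.tendsto 0)
    have s1 : Tendsto (fun u : ℝ => Real.sqrt ((u + u - 2)/(u*u))) atTop (nhds 0) := hsq.comp h1
    have s2 : Tendsto (fun u : ℝ => Real.sqrt ((u + 1 + u - 2)/((u+1)*u))) atTop (nhds 0) := hsq.comp h2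
    have hfin := (s1.neg).add s2
    simp only [neg_zero, add_zero] at hfin
    refine hfin.congr ?_
    intro u
    rw [hf, hf]
end

section
/- Define g(u) = -sqrt((u+4)/(6u)) + sqrt((u+2)/(4u)) - sqrt(1/2) + sqrt((u+1)/(3u)) for real u ≥ 6 (this is -f(u,6)+f(u,4)-f(u,2)+f(u,3) with f(x,y)=sqrt((x+y-2)/(xy))). Then g(u) ≤ max(g(6), lim_{u→∞} g(u)) < -0.033 for all u ≥ 6; in particular g is negative on [6,∞). -/
open Real Filter

set_option maxHeartbeats 1000000

private lemma stmt19_sqrt_le (x c : ℝ) (hc : 0 ≤ c) (h : x ≤ c^2) : Real.sqrt x ≤ c := by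
  rw [← Real.sqrt_sq hc]; exact Real.sqrt_le_sqrt h

private lemma stmt19_le_sqrt (x c : ℝ) (hc : 0 ≤ c) (h : c^2 ≤ x) : c ≤ Real.sqrt x := by
  rw [← Real.sqrt_sq hc]; exact Real.sqrt_le_sqrt h

private lemma stmt19_lim (c k : ℝ) (hk : 0 < k) :
    Tendsto (fun u : ℝ => Real.sqrt ((u + c) / (k * u))) atTop (nhds (Real.sqrt (1/k))) := by
  have h1 : Tendsto (fun u : ℝ => 1/k + (c/k) * u⁻¹) atTop (nhds (1/k)) := by
    have h0 : Tendsto (fun u : ℝ => u⁻¹) atTop (nhds (0:ℝ)) := tendsto_inv_atTop_zero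
    have h2 := (h0.const_mul (c/k)).const_add (1/k)
    simpa using h2
  have h2 : (fun u : ℝ => Real.sqrt ((u + c)/(k*u))) =ᶠ[atTop]
      (fun u => Real.sqrt (1/k + (c/k) * u⁻¹)) := by
    filter_upwards [eventually_gt_atTop 0] with u hu
    rw [show (u + c)/(k*u) = 1/k + (c/k) * u⁻¹ by field_simp]
  rw [tendsto_congr' h2]
  exact (Real.continuous_sqrt.tendsto _).comp h1


private lemma stmt19_q1 (v : ℝ) (h1 : 1/4 ≤ v) (h2 : v ≤ 1/3) :
    (0.4082 + 1.4255*(v - 1/4))^2 ≤ 4*v/3 - 1/6 := by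
  nlinarith [mul_nonneg (sub_nonneg.mpr h1) (sub_nonneg.mpr h2)]

private lemma stmt19_q2 (v : ℝ) (h1 : 1/4 ≤ v) (h2 : v ≤ 1/3) :
    v ≤ (0.5386 + 0.9285*(v - 0.29))^2 := by
  nlinarith [sq_nonneg (v - 0.2899)]

private lemma stmt19_q3 (v : ℝ) :
    2*v/3 + 1/6 ≤ (0.6 + (5/9)*(v - 0.29))^2 := by
  nlinarith [sq_nonneg (v - 0.29)]

private lemma stmt19_q4 (v : ℝ) (h1 : 1/4 ≤ v) (h2 : v ≤ 1/3) :
    (0.5 + 0.928*(v - 1/4))^2 ≤ v := by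
  nlinarith [mul_nonneg (sub_nonneg.mpr h1) (sub_nonneg.mpr h2)]

private lemma stmt19_q5 (v : ℝ) (h1 : 1/4 ≤ v) (h2 : v ≤ 1/3) :
    (0.5773 + 0.555*(v - 1/4))^2 ≤ 2*v/3 + 1/6 := by
  nlinarith [mul_nonneg (sub_nonneg.mpr h1) (sub_nonneg.mpr h2)]

private lemma stmt19_q6 (v : ℝ) (h1 : 1/4 ≤ v) (h2 : v ≤ 1/3) :
    4*((0.57736 + (0.5386 + 0.9285*(v - 0.29)))*(0.62361 + (0.6 + (5/9)*(v - 0.29))))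
      ≤ 3*((0.527 + (0.4082 + 1.4255*(v - 1/4)))*(0.6236 + (0.5773 + 0.555*(v - 1/4))))
        + 2*((0.527 + (0.4082 + 1.4255*(v - 1/4)))*(0.5773 + (0.5 + 0.928*(v - 1/4)))) := by
  nlinarith [mul_nonneg (sub_nonneg.mpr h1) (sub_nonneg.mpr h2), sq_nonneg (v - 1/4), sq_nonneg (1/3 - v)]



private lemma stmt19_key (A B C P Q R v : ℝ)
    (hA0 : 0 ≤ A) (hB0 : 0 ≤ B) (hC0 : 0 ≤ C)
    (hvlo : 1/4 ≤ v) (hvhi : v ≤ 1/3)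
    (haLB : 0.4082 + 1.4255*(v - 1/4) ≤ A)
    (hbUB : B ≤ 0.5386 + 0.9285*(v - 0.29))
    (hcUB : C ≤ 0.6 + (5/9)*(v - 0.29))
    (hblLB : 0.5 + 0.928*(v - 1/4) ≤ B)
    (hclLB : 0.5773 + 0.555*(v - 1/4) ≤ C)
    (hPlo : 0.527 ≤ P) (hQlo : 0.5773 ≤ Q) (hQhi : Q ≤ 0.57736)
    (hRlo : 0.6236 ≤ R) (hRhi : R ≤ 0.62361) :
    4*(Q+B)*(R+C) ≤ 3*(P+A)*(R+C) + 2*(P+A)*(Q+B) := by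
  have h1 : (Q+B)*(R+C) ≤
      (0.57736 + (0.5386 + 0.9285*(v - 0.29)))*(0.62361 + (0.6 + (5/9)*(v - 0.29))) :=
    mul_le_mul (by linarith only [hQhi, hbUB]) (by linarith only [hRhi, hcUB])
      (by linarith only [hRlo, hC0]) (by linarith only [hvlo])
  have h2 : (0.527 + (0.4082 + 1.4255*(v - 1/4)))*(0.6236 + (0.5773 + 0.555*(v - 1/4)))
      ≤ (P+A)*(R+C) :=
    mul_le_mul (by linarith only [hPlo, haLB]) (by linarith only [hRlo, hclLB])
      (by linarith only [hvlo]) (by linarith only [hPlo, hA0])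
  have h3 : (0.527 + (0.4082 + 1.4255*(v - 1/4)))*(0.5773 + (0.5 + 0.928*(v - 1/4)))
      ≤ (P+A)*(Q+B) :=
    mul_le_mul (by linarith only [hPlo, haLB]) (by linarith only [hQlo, hblLB])
      (by linarith only [hvlo]) (by linarith only [hPlo, hA0])
  have h4 : 4*((0.57736 + (0.5386 + 0.9285*(v - 0.29)))*(0.62361 + (0.6 + (5/9)*(v - 0.29))))
      ≤ 3*((0.527 + (0.4082 + 1.4255*(v - 1/4)))*(0.6236 + (0.5773 + 0.555*(v - 1/4))))
        + 2*((0.527 + (0.4082 + 1.4255*(v - 1/4)))*(0.5773 + (0.5 + 0.928*(v - 1/4)))) := by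
    nlinarith [mul_nonneg (sub_nonneg.mpr hvlo) (sub_nonneg.mpr hvhi),
      sq_nonneg (v - 1/4), sq_nonneg (1/3 - v)]
  rw [mul_assoc 4, mul_assoc 3, mul_assoc 2]
  linarith only [h1, h2, h3, h4]


theorem stmt19 (g : ℝ → ℝ)
    (hg : ∀ u, g u = -Real.sqrt ((u + 4) / (6 * u)) + Real.sqrt ((u + 2) / (4 * u)) -
      Real.sqrt (1 / 2) + Real.sqrt ((u + 1) / (3 * u))) :
    Filter.Tendsto g Filter.atTop
      (nhds (-Real.sqrt (1 / 6) + Real.sqrt (1 / 4) - Real.sqrt (1 / 2) + Real.sqrt (1 / 3))) ∧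
    (∀ u : ℝ, 6 ≤ u →
      g u ≤ max (g 6)
        (-Real.sqrt (1 / 6) + Real.sqrt (1 / 4) - Real.sqrt (1 / 2) + Real.sqrt (1 / 3))) ∧
    max (g 6) (-Real.sqrt (1 / 6) + Real.sqrt (1 / 4) - Real.sqrt (1 / 2) + Real.sqrt (1 / 3))
      < -0.033 := by
  refine ⟨?_, ?_, ?_⟩
  · -- the limit
    have h6 := stmt19_lim 4 6 (by norm_num)
    have h4 := stmt19_lim 2 4 (by norm_num)
    have h3 := stmt19_lim 1 3 (by norm_num)
    have h := ((h6.neg.add h4).sub (tendsto_const_nhds (x := Real.sqrt (1/2)))).add h3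
    exact h.congr (fun u => (hg u).symm)
  · -- g u ≤ g 6 for 6 ≤ u
    intro u hu
    have hu0 : (0:ℝ) < u := by linarith
    refine le_trans ?_ (le_max_left _ _)
    rw [hg u, hg 6]
    set A := Real.sqrt ((u+4)/(6*u)) with hAdef
    set B := Real.sqrt ((u+2)/(4*u)) with hBdef
    set C := Real.sqrt ((u+1)/(3*u)) with hCdef
    set P := Real.sqrt ((6+4)/(6*6)) with hPdef
    set Q := Real.sqrt ((6+2)/(4*6)) with hQdef
    set R := Real.sqrt ((6+1)/(3*6)) with hRdef
    have hA0 : 0 ≤ A := Real.sqrt_nonneg _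
    have hB0 : 0 ≤ B := Real.sqrt_nonneg _
    have hC0 : 0 ≤ C := Real.sqrt_nonneg _
    have hA2 : A^2 = (u+4)/(6*u) := Real.sq_sqrt (by positivity)
    have hB2 : B^2 = (u+2)/(4*u) := Real.sq_sqrt (by positivity)
    have hC2 : C^2 = (u+1)/(3*u) := Real.sq_sqrt (by positivity)
    have hP2 : P^2 = 5/18 := by
      rw [hPdef, Real.sq_sqrt (by norm_num : (0:ℝ) ≤ (6+4)/(6*6))]; norm_num
    have hQ2 : Q^2 = 1/3 := by
      rw [hQdef, Real.sq_sqrt (by norm_num : (0:ℝ) ≤ (6+2)/(4*6))]; norm_num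
    have hR2 : R^2 = 7/18 := by
      rw [hRdef, Real.sq_sqrt (by norm_num : (0:ℝ) ≤ (6+1)/(3*6))]; norm_num
    have hPlo : (0.527:ℝ) ≤ P := by
      rw [hPdef]; exact stmt19_le_sqrt _ _ (by norm_num) (by norm_num)
    have hQlo : (0.5773:ℝ) ≤ Q := by
      rw [hQdef]; exact stmt19_le_sqrt _ _ (by norm_num) (by norm_num)
    have hQhi : Q ≤ 0.57736 := by
      rw [hQdef]; exact stmt19_sqrt_le _ _ (by norm_num) (by norm_num)
    have hRlo : (0.6236:ℝ) ≤ R := by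
      rw [hRdef]; exact stmt19_le_sqrt _ _ (by norm_num) (by norm_num)
    have hRhi : R ≤ 0.62361 := by
      rw [hRdef]; exact stmt19_sqrt_le _ _ (by norm_num) (by norm_num)
    have hvlo : 1/4 ≤ B^2 := by
      rw [hB2, le_div_iff₀ (by positivity)]; linarith only [hu]
    have hvhi : B^2 ≤ 1/3 := by
      rw [hB2, div_le_iff₀ (by positivity)]; linarith only [hu]
    have hA2v : A^2 = 4*B^2/3 - 1/6 := by rw [hA2, hB2]; field_simp; ring
    have hC2v : C^2 = 2*B^2/3 + 1/6 := by rw [hC2, hB2]; field_simp; ring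
    -- linear bounds in v = B^2
    have haLB : 0.4082 + 1.4255*(B^2 - 1/4) ≤ A :=
      le_of_pow_le_pow_left₀ two_ne_zero hA0 (by rw [hA2v]; exact stmt19_q1 _ hvlo hvhi)
    have hbUB : B ≤ 0.5386 + 0.9285*(B^2 - 0.29) :=
      le_of_pow_le_pow_left₀ two_ne_zero (by linarith only [hvlo]) (stmt19_q2 _ hvlo hvhi)
    have hcUB : C ≤ 0.6 + (5/9)*(B^2 - 0.29) :=
      le_of_pow_le_pow_left₀ two_ne_zero (by linarith only [hvlo]) (by rw [hC2v]; exact stmt19_q3 _)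
    have hblLB : 0.5 + 0.928*(B^2 - 1/4) ≤ B :=
      le_of_pow_le_pow_left₀ two_ne_zero hB0 (stmt19_q4 _ hvlo hvhi)
    have hclLB : 0.5773 + 0.555*(B^2 - 1/4) ≤ C :=
      le_of_pow_le_pow_left₀ two_ne_zero hC0 (by rw [hC2v]; exact stmt19_q5 _ hvlo hvhi)
    have key : 4*(Q+B)*(R+C) ≤ 3*(P+A)*(R+C) + 2*(P+A)*(Q+B) :=
      stmt19_key A B C P Q R (B^2) hA0 hB0 hC0 hvlo hvhi haLB hbUB hcUB hblLB hclLB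
        hPlo hQlo hQhi hRlo hRhi
    clear haLB hbUB hcUB hblLB hclLB hA2v hC2v
    -- transfer back via the difference-of-squares identities
    have f1 : 9*u*(P^2 - A^2) = u - 6 := by rw [hP2, hA2]; field_simp; ring
    have f2 : 12*u*(Q^2 - B^2) = u - 6 := by rw [hQ2, hB2]; field_simp; ring
    have f3 : 18*u*(R^2 - C^2) = u - 6 := by rw [hR2, hC2]; field_simp; ring
    have hS1 : 0 < P + A := by linarith only [hPlo, hA0]
    have hS2 : 0 < Q + B := by linarith only [hQlo, hB0]
    have hS3 : 0 < R + C := by linarith only [hRlo, hC0]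
    have hW : 0 < 36*u*(P+A)*(Q+B)*(R+C) :=
      mul_pos (mul_pos (mul_pos (by linarith only [hu0] : (0:ℝ) < 36*u) hS1) hS2) hS3
    have l1 : 36*u*(P+A)*(Q+B)*(R+C)*(P-A) = 4*((Q+B)*(R+C))*(u-6) := by
      linear_combination 4*(Q+B)*(R+C)*f1
    have l2 : 36*u*(P+A)*(Q+B)*(R+C)*(Q-B) = 3*((P+A)*(R+C))*(u-6) := by
      linear_combination 3*(P+A)*(R+C)*f2
    have l3 : 36*u*(P+A)*(Q+B)*(R+C)*(R-C) = 2*((P+A)*(Q+B))*(u-6) := by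
      linear_combination 2*(P+A)*(Q+B)*f3
    have h6 : (0:ℝ) ≤ u - 6 := by linarith only [hu]
    have step : 4*((Q+B)*(R+C))*(u-6)
        ≤ 3*((P+A)*(R+C))*(u-6) + 2*((P+A)*(Q+B))*(u-6) := by
      have hh := mul_le_mul_of_nonneg_right key h6
      linarith only [hh]
    have hmul : 36*u*(P+A)*(Q+B)*(R+C)*(P-A) ≤ 36*u*(P+A)*(Q+B)*(R+C)*((Q-B)+(R-C)) := by
      rw [l1, show 36*u*(P+A)*(Q+B)*(R+C)*((Q-B)+(R-C))
          = 36*u*(P+A)*(Q+B)*(R+C)*(Q-B) + 36*u*(P+A)*(Q+B)*(R+C)*(R-C) from by ring,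
        l2, l3]
      exact step
    have final : P - A ≤ (Q - B) + (R - C) := le_of_mul_le_mul_left hmul hW
    linarith only [final]
  · -- the numerical bound
    apply max_lt
    · rw [hg 6]
      have b1 : (0.527046:ℝ) ≤ Real.sqrt ((6+4)/(6*6)) :=
        stmt19_le_sqrt _ _ (by norm_num) (by norm_num)
      have b2 : Real.sqrt ((6+2)/(4*6)) ≤ 0.5773503 :=
        stmt19_sqrt_le _ _ (by norm_num) (by norm_num)
      have b3 : (0.7071067:ℝ) ≤ Real.sqrt (1/2) :=
        stmt19_le_sqrt _ _ (by norm_num) (by norm_num)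
      have b4 : Real.sqrt ((6+1)/(3*6)) ≤ 0.62361 :=
        stmt19_sqrt_le _ _ (by norm_num) (by norm_num)
      linarith only [b1, b2, b3, b4]
    · have b1 : (0.408:ℝ) ≤ Real.sqrt (1/6) :=
        stmt19_le_sqrt _ _ (by norm_num) (by norm_num)
      have b2 : Real.sqrt (1/4) ≤ 0.5 :=
        stmt19_sqrt_le _ _ (by norm_num) (by norm_num)
      have b3 : (0.707:ℝ) ≤ Real.sqrt (1/2) :=
        stmt19_le_sqrt _ _ (by norm_num) (by norm_num)
      have b4 : Real.sqrt (1/3) ≤ 0.578 :=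
        stmt19_sqrt_le _ _ (by norm_num) (by norm_num)
      linarith only [b1, b2, b3, b4]
end
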